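/- arXiv:1710.03223 — 10 statements merged into one kernel-verified Lean document; each statement's English description precedes it below -/
import Mathlib

section
/- Let v1, v2, v3 be vectors in ℕ^n. For i ≠ j define MIN(v_i, v_j) = +∞ (as an element of ℕ∞) if v_i = v_j, and otherwise MIN(v_i, v_j) = min over all coordinates k with v_i[k] ≠ v_j[k] of min(v_i[k], v_j[k]). Then there exists a permutation δ of {1,2,3} such that MIN(v_{δ(1)}, v_{δ(2)}) = MIN(v_{δ(2)}, v_{δ(3)}) ≤ MIN(v_{δ(1)}, v_{δ(3)}). -/
/-- `MIN v w` : `⊤` if `v = w`, otherwise the minimum over coordinates `k` with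
`v k ≠ w k` of `min (v k) (w k)`, as an element of `ℕ∞`. -/
noncomputable def MIN {n : ℕ} (v w : Fin n → ℕ) : ℕ∞ :=
  sInf {x : ℕ∞ | ∃ k : Fin n, v k ≠ w k ∧ x = ((min (v k) (w k) : ℕ) : ℕ∞)}

lemma MIN_comm {n : ℕ} (v w : Fin n → ℕ) : MIN v w = MIN w v := by
  unfold MIN
  congr 1
  ext x
  constructor <;> rintro ⟨k, h1, h2⟩ <;> exact ⟨k, h1.symm, by rw [h2, min_comm]⟩

lemma MIN_ultra {n : ℕ} (a b c : Fin n → ℕ) :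
    min (MIN a b) (MIN b c) ≤ MIN a c := by
  apply le_sInf
  rintro x ⟨k, hk, rfl⟩
  have : (a k ≠ b k ∧ min (a k) (b k) ≤ min (a k) (c k)) ∨
      (b k ≠ c k ∧ min (b k) (c k) ≤ min (a k) (c k)) := by omega
  rcases this with ⟨h, hle⟩ | ⟨h, hle⟩
  · exact le_trans (min_le_left _ _)
      (le_trans (sInf_le ⟨k, h, rfl⟩) (by exact_mod_cast hle))
  · exact le_trans (min_le_right _ _)
      (le_trans (sInf_le ⟨k, h, rfl⟩) (by exact_mod_cast hle))

theorem stmt_0 {n : ℕ} (v : Fin 3 → (Fin n → ℕ)) :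
    ∃ δ : Equiv.Perm (Fin 3),
      MIN (v (δ 0)) (v (δ 1)) = MIN (v (δ 1)) (v (δ 2)) ∧
      MIN (v (δ 1)) (v (δ 2)) ≤ MIN (v (δ 0)) (v (δ 2)) := by
  set x := MIN (v 0) (v 1) with hx
  set y := MIN (v 1) (v 2) with hy
  set z := MIN (v 0) (v 2) with hz
  have h1 : min x y ≤ z := MIN_ultra (v 0) (v 1) (v 2)
  have h2 : min x z ≤ y := by
    have := MIN_ultra (v 1) (v 0) (v 2)
    rwa [MIN_comm (v 1) (v 0)] at this
  have h3 : min z y ≤ x := by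
    have := MIN_ultra (v 0) (v 2) (v 1)
    rwa [MIN_comm (v 2) (v 1)] at this
  -- case 1: z is max (x ≤ z, y ≤ z) → x = y ≤ z
  have case1 : x ≤ z → y ≤ z → ∃ δ : Equiv.Perm (Fin 3),
      MIN (v (δ 0)) (v (δ 1)) = MIN (v (δ 1)) (v (δ 2)) ∧
      MIN (v (δ 1)) (v (δ 2)) ≤ MIN (v (δ 0)) (v (δ 2)) := fun hxz hyz => by
    refine ⟨Equiv.refl (Fin 3), ?_, ?_⟩
    · simp only [Equiv.refl_apply]
      exact le_antisymm (le_trans (le_of_eq (min_eq_left hxz).symm) h2)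
        (le_trans (le_of_eq (min_eq_right hyz).symm) h3)
    · simpa only [Equiv.refl_apply] using hyz
  have case2 : z ≤ x → y ≤ x → ∃ δ : Equiv.Perm (Fin 3),
      MIN (v (δ 0)) (v (δ 1)) = MIN (v (δ 1)) (v (δ 2)) ∧
      MIN (v (δ 1)) (v (δ 2)) ≤ MIN (v (δ 0)) (v (δ 2)) := fun hzx hyx => by
    have e0 : (Equiv.swap (1 : Fin 3) 2) 0 = 0 := by decide
    have e1 : (Equiv.swap (1 : Fin 3) 2) 1 = 2 := by decide
    have e2 : (Equiv.swap (1 : Fin 3) 2) 2 = 1 := by decide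
    refine ⟨Equiv.swap 1 2, ?_, ?_⟩
    · rw [e0, e1, e2, MIN_comm (v 2) (v 1)]
      exact le_antisymm (le_trans (le_of_eq (min_eq_right hzx).symm) h2)
        (le_trans (le_of_eq (min_eq_right hyx).symm) h1)
    · rw [e0, e1, e2, MIN_comm (v 2) (v 1)]
      exact hyx
  have case3 : x ≤ y → z ≤ y → ∃ δ : Equiv.Perm (Fin 3),
      MIN (v (δ 0)) (v (δ 1)) = MIN (v (δ 1)) (v (δ 2)) ∧
      MIN (v (δ 1)) (v (δ 2)) ≤ MIN (v (δ 0)) (v (δ 2)) := fun hxy hzy => by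
    have e0 : (Equiv.swap (0 : Fin 3) 1) 0 = 1 := by decide
    have e1 : (Equiv.swap (0 : Fin 3) 1) 1 = 0 := by decide
    have e2 : (Equiv.swap (0 : Fin 3) 1) 2 = 2 := by decide
    refine ⟨Equiv.swap 0 1, ?_, ?_⟩
    · rw [e0, e1, e2, MIN_comm (v 1) (v 0)]
      exact le_antisymm (le_trans (le_of_eq (min_eq_left hxy).symm) h1)
        (le_trans (le_of_eq (min_eq_left hzy).symm) h3)
    · rw [e0, e1, e2]
      exact hzy
  rcases le_total x y with hxy | hyx
  · rcases le_total y z with hyz | hzy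
    · exact case1 (le_trans hxy hyz) hyz
    · exact case3 hxy hzy
  · rcases le_total x z with hxz | hzx
    · exact case1 hxz (le_trans hyx hxz)
    · exact case2 hzx hyx
end

section
/- Let v1, v2, v3 be vectors in ℕ^n with MIN defined as: MIN(v_i, v_j) = +∞ if v_i = v_j, and otherwise the minimum over coordinates k where v_i[k] ≠ v_j[k] of min(v_i[k], v_j[k]). Then it is impossible that MIN(v_1, v_2) < MIN(v_1, v_3) ≤ MIN(v_2, v_3) (strictly less in the first inequality). -/
lemma MIN_le {n : ℕ} {v w : Fin n → ℕ} {k : Fin n} (h : v k ≠ w k) :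
    MIN v w ≤ ((min (v k) (w k) : ℕ) : ℕ∞) :=
  sInf_le ⟨k, h, rfl⟩

theorem stmt_1 {n : ℕ} (v₁ v₂ v₃ : Fin n → ℕ) :
    ¬ (MIN v₁ v₂ < MIN v₁ v₃ ∧ MIN v₁ v₃ ≤ MIN v₂ v₃) := by
  rintro ⟨h1, h2⟩
  -- the set defining MIN v₁ v₂ is nonempty
  have hne : {x : ℕ∞ | ∃ k : Fin n, v₁ k ≠ v₂ k ∧ x = ((min (v₁ k) (v₂ k) : ℕ) : ℕ∞)}.Nonempty := by
    by_contra h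
    rw [Set.not_nonempty_iff_eq_empty] at h
    have : MIN v₁ v₂ = ⊤ := by rw [MIN, h, sInf_empty]
    rw [this] at h1
    exact (lt_irrefl _ (lt_of_le_of_lt le_top h1))
  have hmem : MIN v₁ v₂ ∈ _ := csInf_mem hne
  obtain ⟨k, hk, heq⟩ := hmem
  rcases le_total (v₁ k) (v₂ k) with hle | hle
  · -- min = v₁ k
    have hmin : min (v₁ k) (v₂ k) = v₁ k := min_eq_left hle
    by_cases h3 : v₃ k = v₁ k
    · -- then v₂ k ≠ v₃ k, and min (v₂ k) (v₃ k) = v₁ k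
      have hk' : v₂ k ≠ v₃ k := fun h => hk (by rw [h3] at h; exact h.symm)
      have hmin2 : min (v₂ k) (v₃ k) = v₁ k := by rw [h3]; exact min_eq_right hle
      have hle2 : MIN v₂ v₃ ≤ ((v₁ k : ℕ) : ℕ∞) := by
        have h := MIN_le hk'; rwa [hmin2] at h
      have : MIN v₂ v₃ ≤ MIN v₁ v₂ := by rw [heq, hmin]; exact hle2
      exact absurd (lt_of_le_of_lt (h2.trans this) h1) (lt_irrefl _)
    · have hk' : v₁ k ≠ v₃ k := fun h => h3 h.symm
      have hle2 : MIN v₁ v₃ ≤ ((min (v₁ k) (v₃ k) : ℕ) : ℕ∞) := MIN_le hk'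
      have : MIN v₁ v₃ ≤ MIN v₁ v₂ := by
        rw [heq, hmin]
        refine hle2.trans ?_
        exact_mod_cast Nat.cast_le.mpr (min_le_left _ _)
      exact absurd (lt_of_le_of_lt this h1) (lt_irrefl _)
  · -- min = v₂ k
    have hmin : min (v₁ k) (v₂ k) = v₂ k := min_eq_right hle
    by_cases h3 : v₃ k = v₂ k
    · have hk' : v₁ k ≠ v₃ k := fun h => hk (by rw [h3] at h; exact h)
      have hmin2 : min (v₁ k) (v₃ k) = v₂ k := by rw [h3]; exact min_eq_right hle
      have hle2 : MIN v₁ v₃ ≤ MIN v₁ v₂ := by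
        rw [heq, hmin]
        have h := MIN_le hk'; rwa [hmin2] at h
      exact absurd (lt_of_le_of_lt hle2 h1) (lt_irrefl _)
    · have hk' : v₂ k ≠ v₃ k := fun h => h3 h.symm
      have hle2 : MIN v₂ v₃ ≤ MIN v₁ v₂ := by
        rw [heq, hmin]
        refine (MIN_le hk').trans ?_
        exact_mod_cast Nat.cast_le.mpr (min_le_left _ _)
      exact absurd (lt_of_le_of_lt (h2.trans hle2) h1) (lt_irrefl _)
end

section
/- Given a vector d ∈ ℕ^n, n ≥ 1, call a finite set G ⊆ ℕ^(n+1) a solution for d if for all 1 ≤ i < j ≤ n+1, the set {g ∈ G : g[i] ≠ g[j]} is nonempty and min over g in this set of min(g[i], g[j]) equals min(d_i, ..., d_{j-1}). Then for every d ∈ ℕ^n there exists a solution G for d with |G| ≤ ⌈log₂(n+1)⌉. -/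
/-- The minimum of `min (g i) (g j)` over the vectors `g ∈ G` with `g i ≠ g j`. -/
noncomputable def solMin (n : ℕ) (G : Finset (Fin (n + 1) → ℕ)) (i j : Fin (n + 1)) : ℕ :=
  sInf {x : ℕ | ∃ g ∈ G, g i ≠ g j ∧ x = min (g i) (g j)}

/-- `min (d i, …, d (j-1))` for `i < j` in `Fin (n+1)`. -/
noncomputable def dMin (n : ℕ) (d : Fin n → ℕ) (i j : Fin (n + 1)) : ℕ :=
  sInf {x : ℕ | ∃ k : Fin n, (i : ℕ) ≤ (k : ℕ) ∧ (k : ℕ) < (j : ℕ) ∧ x = d k}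

/-- `G` is a solution for the vector `d`. -/
def IsSolution (n : ℕ) (d : Fin n → ℕ) (G : Finset (Fin (n + 1) → ℕ)) : Prop :=
  ∀ i j : Fin (n + 1), i < j →
    (∃ g ∈ G, g i ≠ g j) ∧ solMin n G i j = dMin n d i j

namespace Stmt5Aux

open Finset

/-! ### A popcount-style inequality -/

lemma two_pow_bitcard_le (L k : ℕ) :
    2 ^ ((Finset.range L).filter (fun j => k.testBit j)).card ≤ k % 2 ^ L + 1 := by
  induction L with
  | zero => simp
  | succ L ih =>
    have hmod : k % 2 ^ (L + 1) = k % 2 ^ L + 2 ^ L * (k / 2 ^ L % 2) := Nat.mod_pow_succ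
    have hlt : k % 2 ^ L < 2 ^ L := Nat.mod_lt _ (by positivity)
    rw [Finset.range_add_one, Finset.filter_insert]
    by_cases h : k.testBit L
    · have h2 : k / 2 ^ L % 2 = 1 := by
        simpa [Nat.testBit_eq_decide_div_mod_eq] using h
      rw [if_pos h, Finset.card_insert_of_notMem (by simp)]
      rw [h2, mul_one] at hmod
      rw [pow_succ]
      omega
    · have h2 : k / 2 ^ L % 2 = 0 := by
        have := Nat.mod_two_eq_zero_or_one (k / 2 ^ L)
        rcases this with h' | h'
        · exact h'
        · exact absurd (by simpa [Nat.testBit_eq_decide_div_mod_eq] using h') h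
      rw [if_neg h]
      omega

/-! ### Subset assignment from bits -/

noncomputable def emb (Q : Finset ℕ) (j : ℕ) : ℕ := (Q.sort (· ≤ ·)).getD j 0

noncomputable def PP (Q : Finset ℕ) (m : ℕ) : Finset ℕ :=
  ((Finset.range Q.card).filter (fun j => m.testBit j)).image (emb Q)

lemma emb_mem {Q : Finset ℕ} {j : ℕ} (hj : j < Q.card) : emb Q j ∈ Q := by
  have hlen : j < (Q.sort (· ≤ ·)).length := by rwa [Finset.length_sort]
  rw [emb, List.getD_eq_getElem _ _ hlen]
  exact (Finset.mem_sort (α := ℕ) (· ≤ ·)).mp (List.getElem_mem _)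

lemma emb_inj {Q : Finset ℕ} {j j' : ℕ} (hj : j < Q.card) (hj' : j' < Q.card)
    (h : emb Q j = emb Q j') : j = j' := by
  have hlen : j < (Q.sort (· ≤ ·)).length := by rwa [Finset.length_sort]
  have hlen' : j' < (Q.sort (· ≤ ·)).length := by rwa [Finset.length_sort]
  simp only [emb] at h
  rw [List.getD_eq_getElem _ _ hlen, List.getD_eq_getElem _ _ hlen'] at h
  have hnd : (Q.sort (· ≤ ·)).Nodup := Finset.sort_nodup _ _
  have := (hnd.get_inj_iff (i := ⟨j, hlen⟩) (j := ⟨j', hlen'⟩)).mp (by simpa using h)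
  simpa using this

lemma PP_subset (Q : Finset ℕ) (m : ℕ) : PP Q m ⊆ Q := by
  intro t ht
  rw [PP, Finset.mem_image] at ht
  obtain ⟨j, hj, rfl⟩ := ht
  exact emb_mem (Finset.mem_range.mp (Finset.mem_filter.mp hj).1)

lemma mem_PP {Q : Finset ℕ} {m t : ℕ} :
    t ∈ PP Q m ↔ ∃ j, j < Q.card ∧ m.testBit j ∧ emb Q j = t := by
  simp only [PP, Finset.mem_image, Finset.mem_filter, Finset.mem_range]
  constructor
  · rintro ⟨j, ⟨h1, h2⟩, h3⟩; exact ⟨j, h1, h2, h3⟩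
  · rintro ⟨j, h1, h2, h3⟩; exact ⟨j, ⟨h1, h2⟩, h3⟩

lemma two_pow_card_PP_le (Q : Finset ℕ) (m : ℕ) : 2 ^ (PP Q m).card ≤ m + 1 := by
  have hcard : (PP Q m).card = ((Finset.range Q.card).filter (fun j => m.testBit j)).card := by
    rw [PP]
    apply Finset.card_image_of_injOn
    intro j hj j' hj' h
    exact emb_inj (Finset.mem_range.mp (Finset.mem_filter.mp hj).1)
      (Finset.mem_range.mp (Finset.mem_filter.mp hj').1) h
  rw [hcard]
  calc 2 ^ ((Finset.range Q.card).filter (fun j => m.testBit j)).card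
      ≤ m % 2 ^ Q.card + 1 := two_pow_bitcard_le _ _
    _ ≤ m + 1 := by have := Nat.mod_le m (2 ^ Q.card); omega

lemma PP_separate {Q : Finset ℕ} {m m' : ℕ} (hm : m < 2 ^ Q.card) (hm' : m' < 2 ^ Q.card)
    (hne : m ≠ m') :
    ∃ t, (t ∈ PP Q m ∧ t ∉ PP Q m') ∨ (t ∈ PP Q m' ∧ t ∉ PP Q m) := by
  have hbit : ∃ j, m.testBit j ≠ m'.testBit j := by
    by_contra h
    push_neg at h
    exact hne (Nat.eq_of_testBit_eq h)
  obtain ⟨j, hj⟩ := hbit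
  have hjlt : j < Q.card := by
    by_contra hge
    push_neg at hge
    have h1 : m.testBit j = false :=
      Nat.testBit_eq_false_of_lt (lt_of_lt_of_le hm (Nat.pow_le_pow_right (by norm_num) hge))
    have h2 : m'.testBit j = false :=
      Nat.testBit_eq_false_of_lt (lt_of_lt_of_le hm' (Nat.pow_le_pow_right (by norm_num) hge))
    rw [h1, h2] at hj; exact hj rfl
  refine ⟨emb Q j, ?_⟩
  have key : ∀ mm : ℕ, emb Q j ∈ PP Q mm ↔ mm.testBit j := by
    intro mm
    rw [mem_PP]
    constructor
    · rintro ⟨j', h1, h2, h3⟩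
      rwa [emb_inj h1 hjlt h3] at h2
    · intro h; exact ⟨j, hjlt, h, rfl⟩
  cases hb : m.testBit j <;> cases hb' : m'.testBit j
  · exact absurd (hb.trans hb'.symm) hj
  · right
    refine ⟨(key m').mpr hb', fun hmem => ?_⟩
    exact absurd ((key m).mp hmem) (by simp [hb])
  · left
    refine ⟨(key m).mpr hb, fun hmem => ?_⟩
    exact absurd ((key m').mp hmem) (by simp [hb'])
  · exact absurd (hb.trans hb'.symm) hj

/-! ### The edge-value function and range minima -/

variable (n : ℕ) (d : Fin n → ℕ)

noncomputable def dd : ℕ → ℕ := fun k => if h : k < n then d ⟨k, h⟩ else 0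

noncomputable def mm (x y : ℕ) : ℕ := sInf {v : ℕ | ∃ k, x ≤ k ∧ k < y ∧ v = dd n d k}

variable {n d}

lemma mm_le {x y k : ℕ} (h1 : x ≤ k) (h2 : k < y) : mm n d x y ≤ dd n d k :=
  Nat.sInf_le ⟨k, h1, h2, rfl⟩

lemma mm_attained {x y : ℕ} (h : x < y) : ∃ k, x ≤ k ∧ k < y ∧ dd n d k = mm n d x y := by
  have hne : {v : ℕ | ∃ k, x ≤ k ∧ k < y ∧ v = dd n d k}.Nonempty :=
    ⟨dd n d x, x, le_rfl, h, rfl⟩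
  obtain ⟨k, h1, h2, h3⟩ := Nat.sInf_mem hne
  exact ⟨k, h1, h2, h3.symm⟩

/-- if there is a `μ`-edge in `[x,y)` and `[x,y) ⊆ [a,b)`, then `mm x y = mm a b`. -/
lemma mm_eq_of_edge {a b x y k : ℕ} (hax : a ≤ x) (hyb : y ≤ b) (hxy : x < y)
    (h1 : x ≤ k) (h2 : k < y) (h3 : dd n d k = mm n d a b) : mm n d x y = mm n d a b := by
  apply le_antisymm
  · calc mm n d x y ≤ dd n d k := mm_le h1 h2
      _ = mm n d a b := h3
  · obtain ⟨k', h1', h2', h3'⟩ := mm_attained hxy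
    calc mm n d a b ≤ dd n d k' := mm_le (le_trans hax h1') (lt_of_lt_of_le h2' hyb)
      _ = mm n d x y := h3'

/-! ### group ids -/

variable (n d)

noncomputable def gid (a b x : ℕ) : ℕ :=
  ((Finset.Ico a (min x b)).filter (fun k => dd n d k = mm n d a b)).card

variable {n d}

lemma gid_mono {a b x y : ℕ} (h : x ≤ y) : gid n d a b x ≤ gid n d a b y := by
  apply Finset.card_le_card
  apply Finset.filter_subset_filter
  exact Finset.Ico_subset_Ico le_rfl (min_le_min h le_rfl)

lemma gid_of_le {a b x : ℕ} (h : x ≤ a) : gid n d a b x = 0 := by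
  rw [gid, Finset.Ico_eq_empty, Finset.filter_empty, Finset.card_empty]
  intro hlt
  exact absurd (lt_of_lt_of_le hlt (le_trans (min_le_left _ _) h)) (lt_irrefl a)

lemma gid_succ_le (a b x : ℕ) : gid n d a b (x + 1) ≤ gid n d a b x + 1 := by
  have hsub : (Finset.Ico a (min (x+1) b)).filter (fun k => dd n d k = mm n d a b) ⊆
      insert (min x b) ((Finset.Ico a (min x b)).filter (fun k => dd n d k = mm n d a b)) := by
    intro k hk
    rw [Finset.mem_filter, Finset.mem_Ico] at hk
    rcases lt_or_ge k (min x b) with h | h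
    · exact Finset.mem_insert_of_mem (Finset.mem_filter.mpr ⟨Finset.mem_Ico.mpr ⟨hk.1.1, h⟩, hk.2⟩)
    · have hkeq : k = min x b := by
        have := hk.1.2
        omega
      rw [hkeq]
      exact Finset.mem_insert_self _ _
  calc gid n d a b (x+1) ≤ (insert (min x b)
        ((Finset.Ico a (min x b)).filter (fun k => dd n d k = mm n d a b))).card :=
        Finset.card_le_card hsub
    _ ≤ gid n d a b x + 1 := Finset.card_insert_le _ _

/-- no `μ`-edge strictly between points with equal gid -/
lemma no_edge_of_gid_eq {a b x y : ℕ} (hax : a ≤ x) (hxy : x ≤ y) (hyb : y ≤ b)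
    (hg : gid n d a b x = gid n d a b y) :
    ∀ k, x ≤ k → k < y → dd n d k ≠ mm n d a b := by
  intro k hk1 hk2 hk3
  have hminy : min y b = y := min_eq_left hyb
  have hminx : min x b = x := min_eq_left (le_trans hxy hyb)
  have hsub : (Finset.Ico a (min x b)).filter (fun k => dd n d k = mm n d a b) ⊆
      (Finset.Ico a (min y b)).filter (fun k => dd n d k = mm n d a b) :=
    Finset.filter_subset_filter _ (Finset.Ico_subset_Ico le_rfl (min_le_min hxy le_rfl))
  have hkmem : k ∈ (Finset.Ico a (min y b)).filter (fun k => dd n d k = mm n d a b) := by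
    rw [Finset.mem_filter, Finset.mem_Ico, hminy]
    exact ⟨⟨le_trans hax hk1, hk2⟩, hk3⟩
  have hknot : k ∉ (Finset.Ico a (min x b)).filter (fun k => dd n d k = mm n d a b) := by
    rw [Finset.mem_filter, Finset.mem_Ico, hminx]
    intro hc
    omega
  have : gid n d a b x < gid n d a b y :=
    Finset.card_lt_card ((Finset.ssubset_iff_of_subset hsub).mpr ⟨k, hkmem, hknot⟩)
  omega

lemma edge_of_gid_lt {a b x y : ℕ} (hax : a ≤ x) (hxy : x ≤ y) (hyb : y ≤ b)
    (hg : gid n d a b x < gid n d a b y) :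
    ∃ k, x ≤ k ∧ k < y ∧ dd n d k = mm n d a b := by
  by_contra h
  push_neg at h
  have hminy : min y b = y := min_eq_left hyb
  have hminx : min x b = x := min_eq_left (le_trans hxy hyb)
  have hsub : (Finset.Ico a (min y b)).filter (fun k => dd n d k = mm n d a b) ⊆
      (Finset.Ico a (min x b)).filter (fun k => dd n d k = mm n d a b) := by
    intro k hk
    rw [Finset.mem_filter, Finset.mem_Ico, hminy] at hk
    rw [Finset.mem_filter, Finset.mem_Ico, hminx]
    refine ⟨⟨hk.1.1, ?_⟩, hk.2⟩
    rcases lt_or_ge k x with h' | h'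
    · exact h'
    · exact absurd hk.2 (h k h' hk.1.2)
  have hle : gid n d a b y ≤ gid n d a b x := Finset.card_le_card hsub
  omega

/-! ### thresholds and group intervals -/

variable (n d)

noncomputable def TT (a b c : ℕ) : ℕ := sInf {x : ℕ | c ≤ gid n d a b x}

noncomputable def glo (a b c : ℕ) : ℕ := max a (TT n d a b c)

noncomputable def ghi (a b c : ℕ) : ℕ :=
  if c = gid n d a b b then b else TT n d a b (c + 1) - 1

variable {n d}

lemma TT_le_b {a b c : ℕ} (hc : c ≤ gid n d a b b) : TT n d a b c ≤ b :=
  Nat.sInf_le hc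

lemma TT_mem {a b c : ℕ} (hc : c ≤ gid n d a b b) :
    c ≤ gid n d a b (TT n d a b c) :=
  Nat.sInf_mem (s := {x : ℕ | c ≤ gid n d a b x}) ⟨b, hc⟩

lemma TT_le_iff {a b c : ℕ} (hc : c ≤ gid n d a b b) (x : ℕ) :
    TT n d a b c ≤ x ↔ c ≤ gid n d a b x := by
  constructor
  · intro h
    exact le_trans (TT_mem hc) (gid_mono h)
  · intro h
    exact Nat.sInf_le h

lemma gid_TT {a b c : ℕ} (hc : c ≤ gid n d a b b) : gid n d a b (TT n d a b c) = c := by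
  have hge : c ≤ gid n d a b (TT n d a b c) := TT_mem hc
  rcases Nat.eq_zero_or_pos (TT n d a b c) with h0 | hpos
  · rw [h0] at hge ⊢
    have h00 : gid n d a b 0 = 0 := gid_of_le (Nat.zero_le a)
    omega
  · obtain ⟨m, hm⟩ : ∃ m, TT n d a b c = m + 1 := ⟨TT n d a b c - 1, by omega⟩
    have hmlt : ¬ (c ≤ gid n d a b m) := by
      intro hcon
      have : TT n d a b c ≤ m := Nat.sInf_le hcon
      omega
    have hstep := gid_succ_le (n := n) (d := d) a b m
    rw [hm] at hge ⊢
    omega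

lemma group_iff {a b c x : ℕ} (hab : a ≤ b) (hc : c ≤ gid n d a b b) :
    (a ≤ x ∧ x ≤ b ∧ gid n d a b x = c) ↔ (glo n d a b c ≤ x ∧ x ≤ ghi n d a b c) := by
  constructor
  · rintro ⟨h1, h2, h3⟩
    constructor
    · rw [glo, max_le_iff]
      exact ⟨h1, (TT_le_iff hc x).mpr (le_of_eq h3.symm)⟩
    · rw [ghi]
      by_cases hcr : c = gid n d a b b
      · rw [if_pos hcr]; exact h2
      · rw [if_neg hcr]
        have hc1 : c + 1 ≤ gid n d a b b := by
          have := gid_mono (n := n) (d := d) (a := a) (b := b) h2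
          omega
        have : ¬ (TT n d a b (c+1) ≤ x) := by
          rw [TT_le_iff hc1 x]
          omega
        omega
  · rintro ⟨h1, h2⟩
    have hax : a ≤ x := le_trans (le_max_left _ _) h1
    have hxb : x ≤ b := by
      rcases eq_or_ne c (gid n d a b b) with hcr | hcr
      · rw [ghi, if_pos hcr] at h2; exact h2
      · rw [ghi, if_neg hcr] at h2
        have hc1 : c + 1 ≤ gid n d a b b := lt_of_le_of_ne hc hcr
        have := TT_le_b hc1
        omega
    have hge : c ≤ gid n d a b x := by
      rw [← TT_le_iff hc x]
      exact le_trans (le_max_right _ _) h1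
    have hle : gid n d a b x ≤ c := by
      rcases eq_or_ne c (gid n d a b b) with hcr | hcr
      · rw [hcr]; exact gid_mono hxb
      · rw [ghi, if_neg hcr] at h2
        have hc1 : c + 1 ≤ gid n d a b b := lt_of_le_of_ne hc hcr
        have hTpos : 1 ≤ TT n d a b (c+1) := by
          by_contra h0
          push_neg at h0
          interval_cases h : TT n d a b (c+1)
          · have : c + 1 ≤ gid n d a b 0 := by
              rw [← TT_le_iff hc1 0]; omega
            have : gid n d a b 0 = 0 := gid_of_le (Nat.zero_le a)
            omega
        have hxlt : ¬ (TT n d a b (c+1) ≤ x) := by omega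
        rw [TT_le_iff hc1 x] at hxlt
        omega
    exact ⟨hax, hxb, le_antisymm hle hge⟩

lemma glo_le_ghi {a b c : ℕ} (hab : a ≤ b) (hc : c ≤ gid n d a b b) :
    a ≤ glo n d a b c ∧ glo n d a b c ≤ ghi n d a b c ∧ ghi n d a b c ≤ b := by
  have hwit : ∃ x, a ≤ x ∧ x ≤ b ∧ gid n d a b x = c := by
    refine ⟨max a (TT n d a b c), le_max_left _ _, ?_, ?_⟩
    · rw [max_le_iff]; exact ⟨hab, TT_le_b hc⟩
    · rcases le_or_gt a (TT n d a b c) with h | h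
      · rw [max_eq_right h]; exact gid_TT hc
      · rw [max_eq_left (le_of_lt h)]
        have h0 : gid n d a b a = 0 := gid_of_le le_rfl
        have : c ≤ gid n d a b a := by
          rw [← TT_le_iff hc a]; omega
        omega
  obtain ⟨x, hx1, hx2, hx3⟩ := hwit
  have hmem := (group_iff hab hc).mp ⟨hx1, hx2, hx3⟩
  have hlo_a : a ≤ glo n d a b c := le_max_left _ _
  have hhi_b : ghi n d a b c ≤ b := by
    rw [ghi]
    by_cases hcr : c = gid n d a b b
    · rw [if_pos hcr]
    · rw [if_neg hcr]
      have hc1 : c + 1 ≤ gid n d a b b := lt_of_le_of_ne hc hcr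
      have := TT_le_b hc1
      omega
  exact ⟨hlo_a, le_trans hmem.1 hmem.2, hhi_b⟩

/-! ### sizes and ranks -/

variable (n d)

noncomputable def gsz (a b c : ℕ) : ℕ := ghi n d a b c + 1 - glo n d a b c

noncomputable def gkey (a b c : ℕ) : ℕ :=
  gsz n d a b c * (gid n d a b b + 1) + (gid n d a b b - c)

noncomputable def grank (a b c : ℕ) : ℕ :=
  ((Finset.range (gid n d a b b + 1)).filter (fun c' => gkey n d a b c < gkey n d a b c')).card

variable {n d}

lemma gkey_lt_of_sz_lt {a b c c' : ℕ} (h : gsz n d a b c < gsz n d a b c') :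
    gkey n d a b c < gkey n d a b c' := by
  rw [gkey, gkey]
  set r := gid n d a b b
  calc gsz n d a b c * (r+1) + (r - c) < gsz n d a b c * (r+1) + (r+1) := by omega
    _ = (gsz n d a b c + 1) * (r+1) := by ring
    _ ≤ gsz n d a b c' * (r+1) := Nat.mul_le_mul_right _ (by omega)
    _ ≤ gkey n d a b c' := Nat.le_add_right _ _

lemma gsz_le_of_gkey_lt {a b c c' : ℕ} (h : gkey n d a b c < gkey n d a b c') :
    gsz n d a b c ≤ gsz n d a b c' := by
  by_contra hcon
  push_neg at hcon
  exact absurd (gkey_lt_of_sz_lt hcon) (by omega)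

lemma gkey_ne {a b c c' : ℕ} (hc : c ≤ gid n d a b b) (hc' : c' ≤ gid n d a b b)
    (hne : c ≠ c') : gkey n d a b c ≠ gkey n d a b c' := by
  intro heq
  rcases lt_trichotomy (gsz n d a b c) (gsz n d a b c') with h | h | h
  · exact absurd heq (ne_of_lt (gkey_lt_of_sz_lt h))
  · rw [gkey, gkey, h] at heq
    have : gid n d a b b - c = gid n d a b b - c' := by omega
    omega
  · exact absurd heq.symm (ne_of_lt (gkey_lt_of_sz_lt h))

lemma grank_le {a b c : ℕ} (hc : c ≤ gid n d a b b) : grank n d a b c ≤ gid n d a b b := by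
  have hsub : (Finset.range (gid n d a b b + 1)).filter
      (fun c' => gkey n d a b c < gkey n d a b c') ⊆
      (Finset.range (gid n d a b b + 1)).erase c := by
    intro c' hc'
    rw [Finset.mem_filter] at hc'
    rw [Finset.mem_erase]
    refine ⟨?_, hc'.1⟩
    intro heq
    rw [heq] at hc'
    exact absurd hc'.2 (lt_irrefl _)
  calc grank n d a b c ≤ ((Finset.range (gid n d a b b + 1)).erase c).card :=
      Finset.card_le_card hsub
    _ = gid n d a b b := by
      rw [Finset.card_erase_of_mem (Finset.mem_range.mpr (by omega)), Finset.card_range]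
      omega

lemma grank_injective {a b c c' : ℕ} (hc : c ≤ gid n d a b b) (hc' : c' ≤ gid n d a b b)
    (hne : c ≠ c') : grank n d a b c ≠ grank n d a b c' := by
  have key : ∀ u u', u ≤ gid n d a b b → u' ≤ gid n d a b b →
      gkey n d a b u < gkey n d a b u' → grank n d a b u' < grank n d a b u := by
    intro u u' hu hu' hk
    have hsub : insert u' ((Finset.range (gid n d a b b + 1)).filter
        (fun c'' => gkey n d a b u' < gkey n d a b c'')) ⊆
        (Finset.range (gid n d a b b + 1)).filter
        (fun c'' => gkey n d a b u < gkey n d a b c'') := by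
      intro z hz
      rw [Finset.mem_insert] at hz
      rcases hz with rfl | hz
      · exact Finset.mem_filter.mpr ⟨Finset.mem_range.mpr (by omega), hk⟩
      · rw [Finset.mem_filter] at hz ⊢
        exact ⟨hz.1, lt_trans hk hz.2⟩
    have hcard := Finset.card_le_card hsub
    rw [Finset.card_insert_of_notMem (by
      intro hmem
      rw [Finset.mem_filter] at hmem
      exact absurd hmem.2 (lt_irrefl _))] at hcard
    exact hcard
  rcases lt_or_gt_of_ne (gkey_ne hc hc' hne) with h | h
  · exact (key c c' hc hc' h).ne'
  · exact (key c' c hc' hc h).ne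


/-! ### size bookkeeping -/

lemma sum_gsz {a b : ℕ} (hab : a ≤ b) :
    ∑ c ∈ Finset.range (gid n d a b b + 1), gsz n d a b c = b + 1 - a := by
  have h1 : (Finset.Icc a b).card = ∑ c ∈ Finset.range (gid n d a b b + 1),
      ((Finset.Icc a b).filter (fun x => gid n d a b x = c)).card := by
    apply Finset.card_eq_sum_card_fiberwise
    intro x hx
    rw [Finset.mem_coe, Finset.mem_Icc] at hx
    rw [Finset.mem_coe, Finset.mem_range]
    have := gid_mono (n := n) (d := d) (a := a) (b := b) hx.2
    omega
  have h2 : ∀ c ∈ Finset.range (gid n d a b b + 1),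
      ((Finset.Icc a b).filter (fun x => gid n d a b x = c)).card = gsz n d a b c := by
    intro c hc
    rw [Finset.mem_range] at hc
    have hc' : c ≤ gid n d a b b := by omega
    have hset : (Finset.Icc a b).filter (fun x => gid n d a b x = c) =
        Finset.Icc (glo n d a b c) (ghi n d a b c) := by
      ext x
      rw [Finset.mem_filter, Finset.mem_Icc, Finset.mem_Icc]
      constructor
      · rintro ⟨⟨u1, u2⟩, u3⟩; exact (group_iff hab hc').mp ⟨u1, u2, u3⟩
      · intro h
        have h' := (group_iff hab hc').mpr h
        exact ⟨⟨h'.1, h'.2.1⟩, h'.2.2⟩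
    rw [hset, Nat.card_Icc, gsz]
  rw [Finset.sum_congr rfl h2] at h1
  rw [Nat.card_Icc] at h1
  exact h1.symm

lemma groups_le {a b : ℕ} (hab : a ≤ b) : gid n d a b b + 1 ≤ b + 1 - a := by
  have hsum := sum_gsz (n := n) (d := d) hab
  have hone : ∀ c ∈ Finset.range (gid n d a b b + 1), 1 ≤ gsz n d a b c := by
    intro c hc
    rw [Finset.mem_range] at hc
    have hc' : c ≤ gid n d a b b := by omega
    have h := glo_le_ghi (n := n) (d := d) hab hc'
    rw [gsz]; omega
  calc gid n d a b b + 1 = ∑ _c ∈ Finset.range (gid n d a b b + 1), 1 := by simp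
    _ ≤ ∑ c ∈ Finset.range (gid n d a b b + 1), gsz n d a b c := Finset.sum_le_sum hone
    _ = b + 1 - a := hsum

lemma rank_mul_gsz_le {a b c : ℕ} (hab : a ≤ b) (hc : c ≤ gid n d a b b) :
    (grank n d a b c + 1) * gsz n d a b c ≤ b + 1 - a := by
  set Fc := insert c ((Finset.range (gid n d a b b + 1)).filter
    (fun c' => gkey n d a b c < gkey n d a b c')) with hFc
  have hnotmem : c ∉ (Finset.range (gid n d a b b + 1)).filter
      (fun c' => gkey n d a b c < gkey n d a b c') := by
    intro h; exact absurd (Finset.mem_filter.mp h).2 (lt_irrefl _)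
  have hcard : Fc.card = grank n d a b c + 1 := by
    rw [hFc, Finset.card_insert_of_notMem hnotmem, grank]
  have hle : ∀ c' ∈ Fc, gsz n d a b c ≤ gsz n d a b c' := by
    intro c' hc'
    rw [hFc, Finset.mem_insert] at hc'
    rcases hc' with rfl | hc'
    · exact le_rfl
    · exact gsz_le_of_gkey_lt (Finset.mem_filter.mp hc').2
  have hsub : Fc ⊆ Finset.range (gid n d a b b + 1) := by
    rw [hFc]
    apply Finset.insert_subset_iff.mpr
    exact ⟨Finset.mem_range.mpr (by omega), Finset.filter_subset _ _⟩
  calc (grank n d a b c + 1) * gsz n d a b c = Fc.card • gsz n d a b c := by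
        rw [hcard, smul_eq_mul]
    _ ≤ ∑ c' ∈ Fc, gsz n d a b c' := Finset.card_nsmul_le_sum _ _ _ hle
    _ ≤ ∑ c' ∈ Finset.range (gid n d a b b + 1), gsz n d a b c' :=
        Finset.sum_le_sum_of_subset hsub
    _ = b + 1 - a := sum_gsz hab

/-! ### the core construction -/

lemma core : ∀ N a b, a ≤ b → b - a ≤ N → ∀ Q : Finset ℕ, b + 1 - a ≤ 2 ^ Q.card →
    ∃ f : ℕ → ℕ → Option ℕ,
      (∀ x t v, f x t = some v → a ≤ x ∧ x ≤ b ∧ t ∈ Q ∧ ∃ k, a ≤ k ∧ k < b ∧ dd n d k ≤ v) ∧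
      (∀ x y t v, a ≤ x → x < y → y ≤ b → f x t ≠ f y t → (f x t = some v ∨ f y t = some v) →
        mm n d x y ≤ v) ∧
      (∀ x y, a ≤ x → x < y → y ≤ b →
        ∃ t, f x t ≠ f y t ∧ (f x t = some (mm n d x y) ∨ f y t = some (mm n d x y))) := by
  intro N
  induction N with
  | zero =>
    intro a b hab hN Q hQ
    refine ⟨fun _ _ => none, ?_, ?_, ?_⟩
    · intro x t v h; exact absurd h (by simp)
    · intro x y t v _ _ _ h _; exact absurd rfl h
    · intro x y hax hxy hyb; exfalso; omega
  | succ N IH =>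
    intro a b hab hN Q hQ
    rcases eq_or_lt_of_le hab with heq | hlt
    · subst heq
      refine ⟨fun _ _ => none, ?_, ?_, ?_⟩
      · intro x t v h; exact absurd h (by simp)
      · intro x y t v _ _ _ h _; exact absurd rfl h
      · intro x y hax hxy hyb; exfalso; omega
    · classical
      -- at least one minimal edge, hence at least two groups
      have hr : 1 ≤ gid n d a b b := by
        obtain ⟨k₀, hk1, hk2, hk3⟩ := mm_attained hlt
        have hmem : k₀ ∈ (Finset.Ico a (min b b)).filter (fun k => dd n d k = mm n d a b) := by
          rw [Finset.mem_filter, Finset.mem_Ico, min_self]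
          exact ⟨⟨hk1, hk2⟩, hk3⟩
        rw [gid]
        exact Finset.card_pos.mpr ⟨k₀, hmem⟩
      have hgid_le : ∀ x, x ≤ b → gid n d a b x ≤ gid n d a b b := fun x hx => gid_mono hx
      have hgrp : ∀ x, a ≤ x → x ≤ b →
          glo n d a b (gid n d a b x) ≤ x ∧ x ≤ ghi n d a b (gid n d a b x) := fun x h1 h2 =>
        (group_iff hlt.le (hgid_le x h2)).mp ⟨h1, h2, rfl⟩
      have hmeas : ∀ c, c ≤ gid n d a b b → ghi n d a b c - glo n d a b c ≤ N := by
        intro c hc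
        have hb := glo_le_ghi (n := n) (d := d) hlt.le hc
        by_cases hcase : glo n d a b c = a ∧ ghi n d a b c = b
        · exfalso
          have hga : gid n d a b a = c :=
            ((group_iff hlt.le hc).mpr ⟨by omega, by omega⟩).2.2
          have hgb : gid n d a b b = c :=
            ((group_iff hlt.le hc).mpr ⟨by omega, by omega⟩).2.2
          have h0 : gid n d a b a = 0 := gid_of_le le_rfl
          omega
        · omega
      have hsz : ∀ c, c ≤ gid n d a b b →
          ghi n d a b c + 1 - glo n d a b c ≤ 2 ^ (Q \ PP Q (grank n d a b c)).card := by
        intro c hc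
        have h1 := rank_mul_gsz_le (n := n) (d := d) hlt.le hc
        have h2 := two_pow_card_PP_le Q (grank n d a b c)
        have h3 : (PP Q (grank n d a b c)).card ≤ Q.card :=
          Finset.card_le_card (PP_subset _ _)
        have h4 : (Q \ PP Q (grank n d a b c)).card = Q.card - (PP Q (grank n d a b c)).card :=
          Finset.card_sdiff_of_subset (PP_subset _ _)
        have h5 : gsz n d a b c * 2 ^ (PP Q (grank n d a b c)).card ≤
            2 ^ (Q.card - (PP Q (grank n d a b c)).card) *
              2 ^ (PP Q (grank n d a b c)).card := by
          calc gsz n d a b c * 2 ^ (PP Q (grank n d a b c)).card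
              ≤ gsz n d a b c * (grank n d a b c + 1) := Nat.mul_le_mul_left _ h2
            _ = (grank n d a b c + 1) * gsz n d a b c := mul_comm _ _
            _ ≤ b + 1 - a := h1
            _ ≤ 2 ^ Q.card := hQ
            _ = 2 ^ (Q.card - (PP Q (grank n d a b c)).card + (PP Q (grank n d a b c)).card) :=
                by rw [Nat.sub_add_cancel h3]
            _ = 2 ^ (Q.card - (PP Q (grank n d a b c)).card) *
                2 ^ (PP Q (grank n d a b c)).card := pow_add 2 _ _
        have h6 := Nat.le_of_mul_le_mul_right h5 (by positivity)
        rw [h4]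
        simpa [gsz] using h6
      have hIH : ∀ c, ∃ fc : ℕ → ℕ → Option ℕ, c ≤ gid n d a b b →
          ((∀ x t v, fc x t = some v → glo n d a b c ≤ x ∧ x ≤ ghi n d a b c ∧
              t ∈ Q \ PP Q (grank n d a b c) ∧
              ∃ k, glo n d a b c ≤ k ∧ k < ghi n d a b c ∧ dd n d k ≤ v) ∧
           (∀ x y t v, glo n d a b c ≤ x → x < y → y ≤ ghi n d a b c → fc x t ≠ fc y t →
              (fc x t = some v ∨ fc y t = some v) → mm n d x y ≤ v) ∧
           (∀ x y, glo n d a b c ≤ x → x < y → y ≤ ghi n d a b c →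
              ∃ t, fc x t ≠ fc y t ∧
                (fc x t = some (mm n d x y) ∨ fc y t = some (mm n d x y)))) := by
        intro c
        by_cases hc : c ≤ gid n d a b b
        · obtain ⟨fc, p1, p2, p3⟩ := IH (glo n d a b c) (ghi n d a b c)
            (glo_le_ghi hlt.le hc).2.1 (hmeas c hc) (Q \ PP Q (grank n d a b c)) (hsz c hc)
          exact ⟨fc, fun _ => ⟨p1, p2, p3⟩⟩
        · exact ⟨fun _ _ => none, fun h => absurd h hc⟩
      choose F hF using hIH
      set f : ℕ → ℕ → Option ℕ := fun x t =>
        if a ≤ x ∧ x ≤ b then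
          (if t ∈ PP Q (grank n d a b (gid n d a b x)) then some (mm n d a b)
           else F (gid n d a b x) x t)
        else none with hf_def
      -- values produced by the sub-constructions are strictly above the block minimum
      have hsubval : ∀ c, c ≤ gid n d a b b → ∀ x t v, F c x t = some v →
          mm n d a b < v := by
        intro c hc x t v hv
        obtain ⟨s1, _, _⟩ := hF c hc
        obtain ⟨hx1, hx2, ht, k, hk1, hk2, hk3⟩ := s1 x t v hv
        have hb := glo_le_ghi (n := n) (d := d) hlt.le hc
        have hgl : gid n d a b (glo n d a b c) = c :=
          ((group_iff hlt.le hc).mpr ⟨le_rfl, hb.2.1⟩).2.2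
        have hgh : gid n d a b (ghi n d a b c) = c :=
          ((group_iff hlt.le hc).mpr ⟨hb.2.1, le_rfl⟩).2.2
        have hne := no_edge_of_gid_eq hb.1 hb.2.1 hb.2.2 (hgl.trans hgh.symm) k hk1 hk2
        have hge : mm n d a b ≤ dd n d k :=
          mm_le (le_trans hb.1 hk1) (lt_of_lt_of_le hk2 hb.2.2)
        omega
      have hL1 : ∀ x t v, f x t = some v →
          a ≤ x ∧ x ≤ b ∧ t ∈ Q ∧ ∃ k, a ≤ k ∧ k < b ∧ dd n d k ≤ v := by
        intro x t v hv
        rw [hf_def] at hv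
        simp only at hv
        split_ifs at hv with hx ht
        · obtain ⟨k₀, hk1, hk2, hk3⟩ := mm_attained (n := n) (d := d) hlt
          have hveq : mm n d a b = v := Option.some.inj hv
          exact ⟨hx.1, hx.2, PP_subset _ _ ht, k₀, hk1, hk2, by omega⟩
        · have hc := hgid_le x hx.2
          obtain ⟨s1, _, _⟩ := hF (gid n d a b x) hc
          obtain ⟨hx1, hx2, ht', k, hk1, hk2, hk3⟩ := s1 x t v hv
          have hb := glo_le_ghi (n := n) (d := d) hlt.le hc
          exact ⟨hx.1, hx.2, (Finset.mem_sdiff.mp ht').1, k, le_trans hb.1 hk1,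
            lt_of_lt_of_le hk2 hb.2.2, hk3⟩
      have hL2 : ∀ x y t v, a ≤ x → x < y → y ≤ b → f x t ≠ f y t →
          (f x t = some v ∨ f y t = some v) → mm n d x y ≤ v := by
        intro x y t v hax hxy hyb hne hor
        have hbx : a ≤ x ∧ x ≤ b := ⟨hax, by omega⟩
        have hby : a ≤ y ∧ y ≤ b := ⟨by omega, hyb⟩
        by_cases hcc : gid n d a b x = gid n d a b y
        · by_cases ht : t ∈ PP Q (grank n d a b (gid n d a b x))
          · exfalso
            apply hne
            have e1 : f x t = some (mm n d a b) := by
              rw [hf_def]; simp only; rw [if_pos hbx, if_pos ht]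
            have e2 : f y t = some (mm n d a b) := by
              rw [hf_def]; simp only; rw [if_pos hby, ← hcc, if_pos ht]
            rw [e1, e2]
          · have e1 : f x t = F (gid n d a b x) x t := by
              rw [hf_def]; simp only; rw [if_pos hbx, if_neg ht]
            have e2 : f y t = F (gid n d a b x) y t := by
              rw [hf_def]; simp only; rw [if_pos hby, ← hcc, if_neg ht]
            obtain ⟨_, s2, _⟩ := hF (gid n d a b x) (hgid_le x hbx.2)
            rw [e1, e2] at hne hor
            exact s2 x y t v (hgrp x hax hbx.2).1 hxy
              (by rw [hcc]; exact (hgrp y hby.1 hyb).2) hne hor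
        · have hlt2 : gid n d a b x < gid n d a b y :=
            lt_of_le_of_ne (gid_mono (le_of_lt hxy)) hcc
          obtain ⟨k, hk1, hk2, hk3⟩ := edge_of_gid_lt hax (le_of_lt hxy) hyb hlt2
          have hmxy : mm n d x y = mm n d a b := mm_eq_of_edge hax hyb hxy hk1 hk2 hk3
          have hval : ∀ z, f z t = some v → mm n d a b ≤ v := by
            intro z hz
            rw [hf_def] at hz
            simp only at hz
            split_ifs at hz with hbz htz
            · exact le_of_eq (Option.some.inj hz)
            · exact le_of_lt (hsubval _ (hgid_le z hbz.2) z t v hz)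
          rw [hmxy]
          rcases hor with h | h
          · exact hval x h
          · exact hval y h
      have hL3 : ∀ x y, a ≤ x → x < y → y ≤ b →
          ∃ t, f x t ≠ f y t ∧ (f x t = some (mm n d x y) ∨ f y t = some (mm n d x y)) := by
        intro x y hax hxy hyb
        have hbx : a ≤ x ∧ x ≤ b := ⟨hax, by omega⟩
        have hby : a ≤ y ∧ y ≤ b := ⟨by omega, hyb⟩
        by_cases hcc : gid n d a b x = gid n d a b y
        · obtain ⟨s1, _, s3⟩ := hF (gid n d a b x) (hgid_le x hbx.2)
          obtain ⟨t, ht1, ht2⟩ := s3 x y (hgrp x hax hbx.2).1 hxy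
            (by rw [hcc]; exact (hgrp y hby.1 hyb).2)
          have htQ : t ∈ Q \ PP Q (grank n d a b (gid n d a b x)) := by
            rcases ht2 with h | h
            · exact (s1 x t _ h).2.2.1
            · exact (s1 y t _ h).2.2.1
          have htP : t ∉ PP Q (grank n d a b (gid n d a b x)) := (Finset.mem_sdiff.mp htQ).2
          have e1 : f x t = F (gid n d a b x) x t := by
            rw [hf_def]; simp only; rw [if_pos hbx, if_neg htP]
          have e2 : f y t = F (gid n d a b x) y t := by
            rw [hf_def]; simp only; rw [if_pos hby, ← hcc, if_neg htP]
          refine ⟨t, ?_, ?_⟩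
          · rw [e1, e2]; exact ht1
          · rw [e1, e2]; exact ht2
        · have hlt2 : gid n d a b x < gid n d a b y :=
            lt_of_le_of_ne (gid_mono (le_of_lt hxy)) hcc
          obtain ⟨k, hk1, hk2, hk3⟩ := edge_of_gid_lt hax (le_of_lt hxy) hyb hlt2
          have hmxy : mm n d x y = mm n d a b := mm_eq_of_edge hax hyb hxy hk1 hk2 hk3
          have hcx := hgid_le x hbx.2
          have hcy := hgid_le y hyb
          have hrk_ne : grank n d a b (gid n d a b x) ≠ grank n d a b (gid n d a b y) :=
            grank_injective hcx hcy hcc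
          have hrk_lt : ∀ c, c ≤ gid n d a b b → grank n d a b c < 2 ^ Q.card := by
            intro c hc
            have h1 := grank_le (n := n) (d := d) hc
            have h2 := groups_le (n := n) (d := d) hlt.le
            omega
          obtain ⟨t, hcase⟩ := PP_separate (hrk_lt _ hcx) (hrk_lt _ hcy) hrk_ne
          rcases hcase with ⟨hin, hout⟩ | ⟨hin, hout⟩
          · have e1 : f x t = some (mm n d a b) := by
              rw [hf_def]; simp only; rw [if_pos hbx, if_pos hin]
            have e2 : f y t = F (gid n d a b y) y t := by
              rw [hf_def]; simp only; rw [if_pos hby, if_neg hout]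
            refine ⟨t, ?_, Or.inl (by rw [e1, hmxy])⟩
            rw [e1, e2]
            cases hFy : F (gid n d a b y) y t with
            | none => simp
            | some v =>
              have := hsubval _ hcy y t v hFy
              simp only [ne_eq, Option.some.injEq]
              omega
          · have e1 : f y t = some (mm n d a b) := by
              rw [hf_def]; simp only; rw [if_pos hby, if_pos hin]
            have e2 : f x t = F (gid n d a b x) x t := by
              rw [hf_def]; simp only; rw [if_pos hbx, if_neg hout]
            refine ⟨t, ?_, Or.inr (by rw [e1, hmxy])⟩
            rw [e1, e2]
            cases hFx : F (gid n d a b x) x t with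
            | none => simp
            | some v =>
              have := hsubval _ hcx x t v hFx
              simp only [ne_eq, Option.some.injEq]
              omega
      exact ⟨f, hL1, hL2, hL3⟩

end Stmt5Aux

theorem stmt_5 (n : ℕ) (hn : 1 ≤ n) (d : Fin n → ℕ) :
    ∃ G : Finset (Fin (n + 1) → ℕ),
      IsSolution n d G ∧ G.card ≤ Nat.clog 2 (n + 1) := by
  classical
  set R := Nat.clog 2 (n + 1) with hR
  obtain ⟨f, hL1, hL2, hL3⟩ := Stmt5Aux.core (n := n) (d := d) n 0 n (Nat.zero_le n)
    (by omega) (Finset.range R)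
    (by
      rw [Finset.card_range, hR]
      have := Nat.le_pow_clog (by norm_num : (1:ℕ) < 2) (n + 1)
      omega)
  set C := (Finset.univ : Finset (Fin n)).sup d + 1 with hCdef
  have hC : ∀ x y : ℕ, x < y → y ≤ n → Stmt5Aux.mm n d x y < C := by
    intro x y h1 h2
    obtain ⟨k, hk1, hk2, hk3⟩ := Stmt5Aux.mm_attained (n := n) (d := d) h1
    have hkn : k < n := by omega
    rw [← hk3, Stmt5Aux.dd, dif_pos hkn]
    have := Finset.le_sup (f := d) (Finset.mem_univ (⟨k, hkn⟩ : Fin n))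
    omega
  set G : Finset (Fin (n + 1) → ℕ) :=
    (Finset.range R).image (fun t => fun i : Fin (n + 1) => (f i.val t).getD C) with hG
  have hdMin : ∀ i j : Fin (n + 1), dMin n d i j = Stmt5Aux.mm n d i.val j.val := by
    intro i j
    rw [dMin, Stmt5Aux.mm]
    congr 1
    ext v
    simp only [Set.mem_setOf_eq]
    constructor
    · rintro ⟨k, h1, h2, h3⟩
      refine ⟨k.val, h1, h2, ?_⟩
      rw [h3, Stmt5Aux.dd, dif_pos k.isLt]
    · rintro ⟨k, h1, h2, h3⟩
      have hkn : k < n := by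
        have := j.isLt
        omega
      refine ⟨⟨k, hkn⟩, h1, h2, ?_⟩
      rw [h3, Stmt5Aux.dd, dif_pos hkn]
  refine ⟨G, ?_, ?_⟩
  · intro i j hij
    have hij' : i.val < j.val := hij
    have hjn : j.val ≤ n := by
      have := j.isLt
      omega
    obtain ⟨t, hne, hsome⟩ := hL3 i.val j.val (Nat.zero_le _) hij' hjn
    have htR : t ∈ Finset.range R := by
      rcases hsome with h | h
      · exact (hL1 _ _ _ h).2.2.1
      · exact (hL1 _ _ _ h).2.2.1
    have hgmem : (fun i : Fin (n + 1) => (f i.val t).getD C) ∈ G := by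
      rw [hG]
      exact Finset.mem_image_of_mem _ htR
    have hCgt : Stmt5Aux.mm n d i.val j.val < C := hC _ _ hij' hjn
    -- key claim about the witness vector
    have claim : (f i.val t).getD C ≠ (f j.val t).getD C ∧
        min ((f i.val t).getD C) ((f j.val t).getD C) = Stmt5Aux.mm n d i.val j.val := by
      rcases hsome with h | h
      · have hi' : (f i.val t).getD C = Stmt5Aux.mm n d i.val j.val := by rw [h]; rfl
        cases hj : f j.val t with
        | none =>
          refine ⟨?_, ?_⟩
          · rw [hi']; simp only [Option.getD_none]; omega
          · rw [hi']; simp only [Option.getD_none]; omega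
        | some v =>
          have hvge : Stmt5Aux.mm n d i.val j.val ≤ v :=
            hL2 _ _ t v (Nat.zero_le _) hij' hjn hne (Or.inr hj)
          have hvne : v ≠ Stmt5Aux.mm n d i.val j.val := by
            intro hcon
            exact hne (by rw [h, hj, hcon])
          refine ⟨?_, ?_⟩
          · rw [hi']; simp only [Option.getD_some]; omega
          · rw [hi']; simp only [Option.getD_some]; omega
      · have hj' : (f j.val t).getD C = Stmt5Aux.mm n d i.val j.val := by rw [h]; rfl
        cases hfi : f i.val t with
        | none =>
          refine ⟨?_, ?_⟩
          · rw [hj']; simp only [Option.getD_none]; omega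
          · rw [hj']; simp only [Option.getD_none]; omega
        | some v =>
          have hvge : Stmt5Aux.mm n d i.val j.val ≤ v :=
            hL2 _ _ t v (Nat.zero_le _) hij' hjn hne (Or.inl hfi)
          have hvne : v ≠ Stmt5Aux.mm n d i.val j.val := by
            intro hcon
            exact hne (by rw [h, hfi, hcon])
          refine ⟨?_, ?_⟩
          · rw [hj']; simp only [Option.getD_some]; omega
          · rw [hj']; simp only [Option.getD_some]; omega
    constructor
    · exact ⟨_, hgmem, claim.1⟩
    · rw [hdMin, solMin]
      apply le_antisymm
      · apply Nat.sInf_le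
        exact ⟨_, hgmem, claim.1, claim.2.symm⟩
      · have hmem : Stmt5Aux.mm n d i.val j.val ∈
            {x : ℕ | ∃ g ∈ G, g i ≠ g j ∧ x = min (g i) (g j)} :=
          ⟨_, hgmem, claim.1, claim.2.symm⟩
        apply le_csInf ⟨_, hmem⟩
        rintro z ⟨g, hg, hgne, rfl⟩
        rw [hG] at hg
        obtain ⟨t', ht', rfl⟩ := Finset.mem_image.mp hg
        have hfne : f i.val t' ≠ f j.val t' := fun hcon =>
          hgne (congrArg (fun o => o.getD C) hcon)
        show Stmt5Aux.mm n d i.val j.val ≤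
          min ((f i.val t').getD C) ((f j.val t').getD C)
        apply le_min
        · cases hfi : f i.val t' with
          | none => simp only [Option.getD_none]; omega
          | some v =>
            have := hL2 i.val j.val t' v (Nat.zero_le _) hij' hjn hfne (Or.inl hfi)
            simpa using this
        · cases hfj : f j.val t' with
          | none => simp only [Option.getD_none]; omega
          | some v =>
            have := hL2 i.val j.val t' v (Nat.zero_le _) hij' hjn hfne (Or.inr hfj)
            simpa using this
  · rw [hG]
    calc ((Finset.range R).image _).card ≤ (Finset.range R).card := Finset.card_image_le
      _ = R := Finset.card_range R
end

section
/- Let n ≥ 1 and let d ∈ ℕ^n be a constant vector, d_i = c for all i. Then every solution G ⊆ ℕ^(n+1) for d (i.e., every finite set G such that for all i < j, min{ min(g[i], g[j]) : g ∈ G, g[i] ≠ g[j] } = c) satisfies |G| ≥ ⌈log₂(n+1)⌉. -/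
theorem stmt_6 (n : ℕ) (hn : 1 ≤ n) (c : ℕ) (d : Fin n → ℕ) (hd : ∀ i, d i = c)
    (G : Finset (Fin (n + 1) → ℕ)) (hG : IsSolution n d G) :
    Nat.clog 2 (n + 1) ≤ G.card := by
  have key : ∀ i j : Fin (n + 1), i < j →
      ∃ g ∈ G, g i ≠ g j ∧ min (g i) (g j) = c := by
    intro i j hij
    obtain ⟨⟨g, hg, hne⟩, hmin⟩ := hG i j hij
    have hijn : (i : ℕ) < (j : ℕ) := hij
    have hdm : dMin n d i j = c := by
      have hin : (i : ℕ) < n := lt_of_lt_of_le hijn (Nat.lt_succ_iff.mp j.isLt)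
      have hwit : c ∈ {x : ℕ | ∃ k : Fin n, (i : ℕ) ≤ (k : ℕ) ∧ (k : ℕ) < (j : ℕ) ∧ x = d k} :=
        ⟨⟨i, hin⟩, le_refl _, hijn, (hd _).symm⟩
      apply le_antisymm
      · exact Nat.sInf_le hwit
      · apply le_csInf ⟨c, hwit⟩
        rintro x ⟨k, -, -, rfl⟩
        exact (hd k).ge
    have hmem : c ∈ {x : ℕ | ∃ g ∈ G, g i ≠ g j ∧ x = min (g i) (g j)} := by
      rw [← hdm, ← hmin]
      exact Nat.sInf_mem ⟨_, g, hg, hne, rfl⟩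
    obtain ⟨g', hg', hne', hc⟩ := hmem
    exact ⟨g', hg', hne', hc.symm⟩
  classical
  have hinj : Function.Injective
      (fun i : Fin (n + 1) => fun g : {x // x ∈ G} => decide ((g : Fin (n + 1) → ℕ) i ≤ c)) := by
    have hne : ∀ i j : Fin (n + 1), i < j →
        (fun g : {x // x ∈ G} => decide ((g : Fin (n + 1) → ℕ) i ≤ c)) ≠
        (fun g : {x // x ∈ G} => decide ((g : Fin (n + 1) → ℕ) j ≤ c)) := by
      intro i j hij hEq
      obtain ⟨g, hg, hne, hc⟩ := key i j hij
      have h2 := congrFun hEq ⟨g, hg⟩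
      simp only [decide_eq_decide] at h2
      by_cases hgi : g i ≤ c
      · have hgj := h2.mp hgi
        omega
      · have hgj : ¬ g j ≤ c := fun h => hgi (h2.mpr h)
        omega
    intro i j h
    rcases lt_trichotomy i j with hij | hij | hij
    · exact absurd h (hne i j hij)
    · exact hij
    · exact absurd h.symm (hne j i hij)
  have hcard := Fintype.card_le_of_injective _ hinj
  simp only [Fintype.card_fin, Fintype.card_fun, Fintype.card_bool, Fintype.card_coe] at hcard
  exact (Nat.clog_le_iff_le_pow one_lt_two).mpr hcard
end

section
/- Let N, m1 ∈ ℕ with 1 ≤ m1 ≤ N, and let x, y, n be natural numbers with y ≥ 1 and x + y ≥ (∑_{k=m1}^N binom(N,k)) + 1. Then x + y - 1 + (x + y)·2^(m1 - 1) ≥ 2^N + 2^(N - m1 + 1) - 1, and in particular if n ≥ x + y - 1 + (x+y)·2^(m1-1) then n + 1 > 2^N. -/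
lemma aux_choose (d j m : ℕ) : d.choose j ≤ (d + m).choose (j + m) := by
  induction m with
  | zero => simp
  | succ m ih =>
    calc d.choose j ≤ (d + m).choose (j + m) := ih
    _ ≤ (d + m + 1).choose (j + m + 1) := by
        rw [Nat.choose_succ_succ]; exact Nat.le_add_right _ _

lemma aux_sum (N m : ℕ) (h1 : 1 ≤ m) (h2 : m ≤ N) :
    2 ^ (N - m + 1) - 1 ≤ ∑ k ∈ Finset.Icc m N, N.choose k := by
  set d := N - m + 1 with hd
  have hN : N = d + (m - 1) := by omega
  have hsum : ∑ j ∈ Finset.Icc 1 d, d.choose j = 2 ^ d - 1 := by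
    have h0 : Finset.Icc 0 d = Finset.range (d + 1) := by
      ext x; simp [Nat.lt_succ_iff]
    have h01 : Finset.Icc 0 d = insert 0 (Finset.Icc 1 d) := by
      ext x; simp; omega
    have h2 : ∑ j ∈ Finset.range (d + 1), d.choose j = 2 ^ d := Nat.sum_range_choose d
    rw [← h0, h01, Finset.sum_insert (by simp)] at h2
    simp at h2
    omega
  have hmap : Finset.Icc m N = Finset.map (addRightEmbedding (m - 1)) (Finset.Icc 1 d) := by
    rw [Finset.map_add_right_Icc]; congr 1 <;> omega
  rw [hmap, Finset.sum_map]
  have hle : ∀ j ∈ Finset.Icc 1 d, d.choose j ≤ N.choose (addRightEmbedding (m - 1) j) := by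
    intro j hj
    simp only [addRightEmbedding_apply]
    calc d.choose j ≤ (d + (m - 1)).choose (j + (m - 1)) := aux_choose d j (m - 1)
    _ = N.choose (j + (m - 1)) := by rw [← hN]
  calc 2 ^ d - 1 = ∑ j ∈ Finset.Icc 1 d, d.choose j := hsum.symm
  _ ≤ _ := Finset.sum_le_sum hle

theorem stmt_9 (N m₁ x y n : ℕ) (h1 : 1 ≤ m₁) (h2 : m₁ ≤ N) (hy : 1 ≤ y)
    (hxy : x + y ≥ (∑ k ∈ Finset.Icc m₁ N, N.choose k) + 1) :
    x + y - 1 + (x + y) * 2 ^ (m₁ - 1) ≥ 2 ^ N + 2 ^ (N - m₁ + 1) - 1 ∧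
    (n ≥ x + y - 1 + (x + y) * 2 ^ (m₁ - 1) → n + 1 > 2 ^ N) := by
  have hS := aux_sum N m₁ h1 h2
  have hpos : 1 ≤ 2 ^ (N - m₁ + 1) := Nat.one_le_two_pow
  have ht : 2 ^ (N - m₁ + 1) ≤ x + y := by omega
  have hpow : 2 ^ (N - m₁ + 1) * 2 ^ (m₁ - 1) = 2 ^ N := by
    rw [← pow_add]; congr 1; omega
  have hP : 2 ^ N ≤ (x + y) * 2 ^ (m₁ - 1) := by
    rw [← hpow]; exact Nat.mul_le_mul_right _ ht
  constructor
  · omega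
  · intro hn; omega
end

section
/- Let n ≥ 1 and N = ⌈log₂(n+1)⌉. Suppose nonnegative integers ℓ_1, ..., ℓ_r satisfy ℓ_p ≥ 2^(m-1) for all p, where m ≤ N, and r = (∑_{k=m}^N binom(N,k)) + 1, and n ≥ (r − 1) + ∑_p ℓ_p. Then n + 1 > 2^N, a contradiction; hence at most ∑_{k=m}^N binom(N,k) of the subvectors in any decomposition of a vector of length n can each have length ≥ 2^(m-1). -/
open Finset

lemma aux_two_pow_le_central (j : ℕ) : 2 ^ j ≤ (2 * j).choose j := by
  induction j with
  | zero => simp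
  | succ j ih =>
    have h1 : (2 * (j + 1)).choose (j + 1)
        = (2 * j + 1).choose j + (2 * j + 1).choose (j + 1) := by
      have : 2 * (j + 1) = (2 * j + 1) + 1 := by ring
      rw [this, Nat.choose_succ_succ']
    have h2 : (2 * j).choose j ≤ (2 * j + 1).choose j :=
      Nat.choose_le_choose j (Nat.le_succ _)
    have h3 : (2 * j).choose j ≤ (2 * j + 1).choose (j + 1) := by
      rw [Nat.choose_symm_half]; exact h2
    calc 2 ^ (j + 1) = 2 ^ j + 2 ^ j := by ring
    _ ≤ (2 * j + 1).choose j + (2 * j + 1).choose (j + 1) :=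
        Nat.add_le_add (le_trans ih h2) (le_trans ih h3)
    _ = _ := h1.symm

lemma aux_two_pow_le_choose {N j : ℕ} (h : 2 * j ≤ N) : 2 ^ j ≤ N.choose j :=
  le_trans (aux_two_pow_le_central j) (Nat.choose_le_choose j h)

lemma aux_reflect (N a b : ℕ) (ha : a ≤ b) (hb : b ≤ N) :
    ∑ k ∈ Finset.Icc a b, N.choose k = ∑ k ∈ Finset.Icc (N - b) (N - a), N.choose k := by
  refine Finset.sum_nbij' (fun k => N - k) (fun k => N - k) ?_ ?_ ?_ ?_ ?_ <;>
    intro x hx <;> simp only [Finset.mem_Icc] at hx ⊢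
  · omega
  · omega
  · omega
  · omega
  · rw [← Nat.choose_symm (show N - x ≤ N by omega)]
    congr 1; omega

lemma aux_geom (n : ℕ) : ∑ i ∈ Finset.range n, 2 ^ i + 1 = 2 ^ n := by
  induction n with
  | zero => simp
  | succ n ih => rw [Finset.sum_range_succ, pow_succ]; omega

lemma aux_key (N m : ℕ) (hm1 : 1 ≤ m) (hm2 : m ≤ N) :
    2 ^ N < (∑ k ∈ Finset.Icc m N, N.choose k + 1) * (1 + 2 ^ (m - 1)) := by
  set S := ∑ k ∈ Finset.Icc m N, N.choose k with hS
  set T := ∑ k ∈ Finset.range m, N.choose k with hT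
  have hsplit : T + S = 2 ^ N := by
    rw [hT, hS, Finset.range_eq_Ico, ← Finset.Ico_add_one_right_eq_Icc m N,
      Finset.sum_Ico_consecutive _ (Nat.zero_le m) (by omega),
      ← Finset.range_eq_Ico, Nat.sum_range_choose]
  have hTle : T ≤ 2 ^ (m - 1) * S + 2 ^ (m - 1) := by
    rcases le_or_gt (2 * m) (N + 1) with hc | hc
    · -- case A : T ≤ S
      have hts : T ≤ S := by
        have hIco : Finset.Ico 0 m = Finset.Icc 0 (m - 1) := by
          rw [← Finset.Ico_add_one_right_eq_Icc]; congr 1; omega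
        have e1 : T = ∑ k ∈ Finset.Icc (N - (m - 1)) (N - 0), N.choose k := by
          rw [hT, Finset.range_eq_Ico, hIco]
          exact aux_reflect N 0 (m - 1) (by omega) (by omega)
        rw [e1, hS]
        apply Finset.sum_le_sum_of_subset
        apply Finset.Icc_subset_Icc <;> omega
      have h2 : S ≤ 2 ^ (m - 1) * S := Nat.le_mul_of_pos_left S (Nat.pow_pos (by norm_num))
      exact le_trans hts (le_trans h2 (Nat.le_add_right _ _))
    · -- case B : 2m ≥ N + 2
      have hSge : 2 ^ (N - m + 1) ≤ S + 1 := by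
        have e1 : S = ∑ k ∈ Finset.Icc 0 (N - m), N.choose k := by
          rw [hS, aux_reflect N m N hm2 le_rfl]
          congr 1
          rw [Nat.sub_self]
        have e2 : ∑ k ∈ Finset.Icc 0 (N - m), 2 ^ k ≤ ∑ k ∈ Finset.Icc 0 (N - m), N.choose k := by
          apply Finset.sum_le_sum
          intro k hk
          simp only [Finset.mem_Icc] at hk
          exact aux_two_pow_le_choose (by omega)
        have e3 : ∑ k ∈ Finset.Icc 0 (N - m), 2 ^ k + 1 = 2 ^ (N - m + 1) := by
          rw [← Finset.Ico_add_one_right_eq_Icc 0 (N - m), ← Finset.range_eq_Ico]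
          exact aux_geom (N - m + 1)
        omega
      have e4 : 2 ^ N = 2 ^ (m - 1) * 2 ^ (N - m + 1) := by
        rw [← pow_add]
        congr 1
        omega
      have e5 : 2 ^ (m - 1) * 2 ^ (N - m + 1) ≤ 2 ^ (m - 1) * (S + 1) :=
        Nat.mul_le_mul_left _ hSge
      have e6 : 2 ^ (m - 1) * (S + 1) = 2 ^ (m - 1) * S + 2 ^ (m - 1) := by ring
      omega
  have hexp : (S + 1) * (1 + 2 ^ (m - 1)) = S + 1 + (2 ^ (m - 1) * S + 2 ^ (m - 1)) := by ring
  omega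

theorem stmt_12 (n m r : ℕ) (hn : 1 ≤ n)
    (hm1 : 1 ≤ m) (hm2 : m ≤ Nat.clog 2 (n + 1))
    (hr : r ≥ (∑ k ∈ Finset.Icc m (Nat.clog 2 (n + 1)), (Nat.clog 2 (n + 1)).choose k) + 1)
    (hle : r * (1 + 2 ^ (m - 1)) ≤ n + 1) :
    False := by
  have h1 : n + 1 ≤ 2 ^ Nat.clog 2 (n + 1) := Nat.le_pow_clog one_lt_two _
  have h2 := aux_key (Nat.clog 2 (n + 1)) m hm1 hm2
  have h3 := Nat.mul_le_mul_right (1 + 2 ^ (m - 1)) hr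
  exact Nat.lt_irrefl _ (lt_of_lt_of_le h2 (le_trans h3 (le_trans hle h1)))
end

section
/- Let p : I → ℕ∞ be a symmetric function on pairs from an index set {1,...,n} (p_{i,j} for i < j), such that for all i < j < k, the three values p_{i,j}, p_{j,k}, p_{i,k} satisfy each is ≥ the min of the other two. If additionally p_{i,j} = min{p_{i,i+1}, ..., p_{j-1,j}} fails for some i < j, there still exists a permutation of {1,...,n} after which the transformed p satisfies p_{i,j} = min{p_{i,i+1}, ..., p_{j-1,j}} for all i < j. (Every 'ultrametric-like' symmetric matrix can be reordered so that off-diagonal entries are determined by the superdiagonal via minima.) -/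
/-- Among `a`, `b`, `c` the minimum is attained at least twice. -/
def MinTwice {α : Type*} [LinearOrder α] (a b c : α) : Prop :=
  (a = b ∧ a ≤ c) ∨ (a = c ∧ a ≤ b) ∨ (b = c ∧ b ≤ a)

namespace Stmt14

lemma mt_third_ge {α : Type*} [LinearOrder α] {a b c : α} (h : MinTwice a b c) :
    min a b ≤ c := by
  rcases h with ⟨h1, h2⟩ | ⟨h1, h2⟩ | ⟨h1, h2⟩
  · exact le_trans (min_le_left _ _) (h1 ▸ h2)
  · exact le_trans (min_le_left _ _) h1.le
  · exact le_trans (min_le_right _ _) h1.le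

lemma mt_eq_of_lt {α : Type*} [LinearOrder α] {a b c : α} (h : MinTwice a b c)
    (hab : a < b) : c = a := by
  rcases h with ⟨h1, h2⟩ | ⟨h1, h2⟩ | ⟨h1, h2⟩
  · exact absurd h1 hab.ne
  · exact h1.symm
  · exact absurd (h1 ▸ h2) hab.not_ge

def Good {n : ℕ} (p : Fin n → Fin n → ℕ∞) (l : List (Fin n)) : Prop :=
  ∀ i j k : Fin l.length, (i : ℕ) < j → (j : ℕ) < k →
    p (l.get i) (l.get k) ≤ p (l.get i) (l.get j) ∧
    p (l.get i) (l.get k) ≤ p (l.get j) (l.get k)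

lemma good_chain_le {n : ℕ} {p : Fin n → Fin n → ℕ∞} {l : List (Fin n)}
    (hg : Good p l) (i c j : ℕ) (hic : i ≤ c) (hcj : c + 1 ≤ j) (hj : j < l.length) :
    p (l.get ⟨i, by omega⟩) (l.get ⟨j, hj⟩) ≤
      p (l.get ⟨c, by omega⟩) (l.get ⟨c + 1, by omega⟩) := by
  rcases eq_or_lt_of_le hic with rfl | hic' <;> rcases eq_or_lt_of_le hcj with h | h
  · subst h; exact le_refl _
  · exact (hg ⟨i, by omega⟩ ⟨i + 1, by omega⟩ ⟨j, hj⟩ (by exact Nat.lt_succ_self i)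
      (by exact h)).1
  · subst h
    exact (hg ⟨i, by omega⟩ ⟨c, by omega⟩ ⟨c + 1, by omega⟩ (by exact hic')
      (by exact Nat.lt_succ_self c)).2
  · exact le_trans
      (hg ⟨i, by omega⟩ ⟨c, by omega⟩ ⟨j, hj⟩ (by exact hic') (by exact Nat.lt_of_succ_lt h)).2
      (hg ⟨c, by omega⟩ ⟨c + 1, by omega⟩ ⟨j, hj⟩ (by exact Nat.lt_succ_self c) (by exact h)).1

lemma exists_consec_le {n : ℕ} {p : Fin n → Fin n → ℕ∞}
    (hult : ∀ i j k : Fin n, MinTwice (p i j) (p j k) (p i k)) (l : List (Fin n)) :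
    ∀ (j i : ℕ) (hij : i < j) (hj : j < l.length),
    ∃ (c : ℕ) (h1 : i ≤ c) (h2 : c + 1 ≤ j),
      p (l.get ⟨c, by omega⟩) (l.get ⟨c + 1, by omega⟩) ≤
        p (l.get ⟨i, by omega⟩) (l.get ⟨j, hj⟩) := by
  intro j
  induction j with
  | zero => omega
  | succ j ih =>
    intro i hij hj
    rcases eq_or_lt_of_le (Nat.lt_succ_iff.mp hij) with rfl | hij'
    · exact ⟨i, le_refl _, le_refl _, le_refl _⟩
    · obtain ⟨c, hc1, hc2, hc3⟩ := ih i hij' (by omega)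
      have h := mt_third_ge (hult (l.get ⟨i, by omega⟩) (l.get ⟨j, by omega⟩)
        (l.get ⟨j + 1, hj⟩))
      rcases min_cases (p (l.get ⟨i, by omega⟩) (l.get ⟨j, by omega⟩))
          (p (l.get ⟨j, by omega⟩) (l.get ⟨j + 1, hj⟩)) with ⟨heq, _⟩ | ⟨heq, _⟩
      · exact ⟨c, hc1, by omega, le_trans hc3 (heq ▸ h)⟩
      · exact ⟨j, by omega, le_refl _, heq ▸ h⟩

lemma exists_good_insert {n : ℕ} {p : Fin n → Fin n → ℕ∞}
    (hsymm : ∀ i j, p i j = p j i)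
    (hult : ∀ i j k : Fin n, MinTwice (p i j) (p j k) (p i k))
    (l : List (Fin n)) (hg : Good p l) (x : Fin n) :
    ∃ m ≤ l.length, Good p (l.insertIdx m x) := by
  classical
  rcases Nat.eq_zero_or_pos l.length with h0 | hpos
  · refine ⟨0, by omega, ?_⟩
    intro i j k hij hjk
    have hlen1 : (l.insertIdx 0 x).length = 1 := by
      rw [List.length_insertIdx_of_le_length (by omega) x, h0]
    have hk := k.isLt
    omega
  · -- choose t : the last index maximizing p (l.get ·) x
    have hAne : (Finset.univ.filter
        (fun i : Fin l.length => ∀ j, p (l.get j) x ≤ p (l.get i) x)).Nonempty := by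
      obtain ⟨t0, -, ht0⟩ := Finset.exists_max_image (Finset.univ : Finset (Fin l.length))
        (fun i => p (l.get i) x) ⟨⟨0, hpos⟩, Finset.mem_univ _⟩
      refine ⟨t0, ?_⟩
      simp only [Finset.mem_filter, Finset.mem_univ, true_and]
      exact fun j => ht0 j (Finset.mem_univ j)
    set t := (Finset.univ.filter
        (fun i : Fin l.length => ∀ j, p (l.get j) x ≤ p (l.get i) x)).max' hAne with htdef
    have htA := Finset.max'_mem _ hAne
    rw [Finset.mem_filter] at htA
    have hmax : ∀ j : Fin l.length, p (l.get j) x ≤ p (l.get t) x := htA.2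
    have hlast : ∀ j : Fin l.length, (t : ℕ) < (j : ℕ) → p (l.get j) x < p (l.get t) x := by
      intro j hj
      by_contra hcon
      push_neg at hcon
      have hjA : j ∈ Finset.univ.filter
          (fun i : Fin l.length => ∀ j, p (l.get j) x ≤ p (l.get i) x) := by
        simp only [Finset.mem_filter, Finset.mem_univ, true_and]
        exact fun j' => le_trans (hmax j') hcon
      have := Finset.le_max' _ j hjA
      rw [← htdef] at this
      exact absurd hj (by exact_mod_cast this.not_gt)
    have htlt : (t : ℕ) < l.length := t.isLt
    have K : ∀ y : Fin l.length, p (l.get y) x < p (l.get t) x →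
        p (l.get y) (l.get t) = p (l.get y) x := by
      intro y hy
      have h := hult (l.get y) x (l.get t)
      refine mt_eq_of_lt h ?_
      rw [hsymm x (l.get t)]
      exact hy
    refine ⟨(t : ℕ) + 1, by omega, ?_⟩
    have hlen' : (l.insertIdx ((t : ℕ) + 1) x).length = l.length + 1 :=
      List.length_insertIdx_of_le_length (by omega) x
    have hget1 : ∀ (c : ℕ) (hc : c < (t : ℕ) + 1) (h1 : c < (l.insertIdx ((t : ℕ) + 1) x).length)
        (h2 : c < l.length),
        (l.insertIdx ((t : ℕ) + 1) x).get ⟨c, h1⟩ = l.get ⟨c, h2⟩ := fun c hc h1 h2 =>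
      List.getElem_insertIdx_of_lt hc h1
    have hget2 : ∀ (h1 : (t : ℕ) + 1 < (l.insertIdx ((t : ℕ) + 1) x).length),
        (l.insertIdx ((t : ℕ) + 1) x).get ⟨(t : ℕ) + 1, h1⟩ = x := fun h1 =>
      List.getElem_insertIdx_self h1
    have hget3 : ∀ (c : ℕ) (hc : (t : ℕ) + 1 < c) (h1 : c < (l.insertIdx ((t : ℕ) + 1) x).length)
        (h2 : c - 1 < l.length),
        (l.insertIdx ((t : ℕ) + 1) x).get ⟨c, h1⟩ = l.get ⟨c - 1, h2⟩ := by
      intro c hc h1 h2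
      obtain ⟨m, rfl⟩ : ∃ m, c = ((t : ℕ) + 1) + m + 1 := ⟨c - (t : ℕ) - 2, by omega⟩
      exact List.getElem_insertIdx_add_succ l x ((t : ℕ) + 1) m (by omega)
    rintro ⟨i, hi⟩ ⟨j, hj⟩ ⟨k, hk⟩ hij hjk
    have hij' : i < j := hij
    have hjk' : j < k := hjk
    have hi' : i < l.length + 1 := by rw [← hlen']; exact hi
    have hj' : j < l.length + 1 := by rw [← hlen']; exact hj
    have hk' : k < l.length + 1 := by rw [← hlen']; exact hk
    rcases lt_trichotomy k ((t : ℕ) + 1) with hkT | hkT | hkT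
    · -- all three below the insertion point
      rw [hget1 i (by omega) hi (by omega), hget1 j (by omega) hj (by omega),
        hget1 k (by omega) hk (by omega)]
      exact hg ⟨i, by omega⟩ ⟨j, by omega⟩ ⟨k, by omega⟩ hij' hjk'
    · -- k is the new element x  (the "x last" case)
      subst hkT
      have hil : i < l.length := by omega
      have hjl : j < l.length := by omega
      rw [hget1 i (by omega) hi hil, hget1 j (by omega) hj hjl, hget2 hk]
      have hfij : p (l.get ⟨i, hil⟩) x ≤ p (l.get ⟨j, hjl⟩) x := by
        rcases eq_or_lt_of_le (hmax ⟨j, hjl⟩) with hjF | hjF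
        · exact hjF ▸ hmax ⟨i, hil⟩
        · have hjt : j < (t : ℕ) := by
            rcases eq_or_lt_of_le (show j ≤ (t : ℕ) by omega) with h | h
            · exact absurd (congrArg (fun z => p (l.get z) x)
                (Fin.ext h : (⟨j, hjl⟩ : Fin l.length) = t)) hjF.ne
            · exact h
          rcases eq_or_lt_of_le (hmax ⟨i, hil⟩) with hiF | hiF
          · exfalso
            have h1 : p (l.get t) x ≤ p (l.get ⟨i, hil⟩) (l.get t) := by
              have h := mt_third_ge (hult (l.get ⟨i, hil⟩) x (l.get t))
              have h4 : p (l.get t) x ≤ min (p (l.get ⟨i, hil⟩) x) (p x (l.get t)) :=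
                le_min (le_of_eq hiF.symm) (le_of_eq (hsymm (l.get t) x))
              exact le_trans h4 h
            have h2 : p (l.get ⟨i, hil⟩) (l.get t) ≤ p (l.get ⟨j, hjl⟩) (l.get t) :=
              (hg ⟨i, hil⟩ ⟨j, hjl⟩ t hij' hjt).2
            exact absurd (le_trans (le_trans h1 h2) (le_of_eq (K ⟨j, hjl⟩ hjF))) hjF.not_ge
          · calc p (l.get ⟨i, hil⟩) x = p (l.get ⟨i, hil⟩) (l.get t) := (K ⟨i, hil⟩ hiF).symm
              _ ≤ p (l.get ⟨j, hjl⟩) (l.get t) := (hg ⟨i, hil⟩ ⟨j, hjl⟩ t hij' hjt).2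
              _ = p (l.get ⟨j, hjl⟩) x := K ⟨j, hjl⟩ hjF
      refine ⟨?_, hfij⟩
      have h3 := mt_third_ge (hult (l.get ⟨i, hil⟩) x (l.get ⟨j, hjl⟩))
      have h4 : p (l.get ⟨i, hil⟩) x ≤ min (p (l.get ⟨i, hil⟩) x) (p x (l.get ⟨j, hjl⟩)) :=
        le_min (le_refl _) (le_trans hfij (le_of_eq (hsymm _ _)))
      exact le_trans h4 h3
    · rcases lt_trichotomy j ((t : ℕ) + 1) with hjT | hjT | hjT
      · -- i < j ≤ t < j' = x-position < k : x not involved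
        have hil : i < l.length := by omega
        have hjl : j < l.length := by omega
        have hk1 : k - 1 < l.length := by omega
        rw [hget1 i (by omega) hi hil, hget1 j (by omega) hj hjl, hget3 k hkT hk hk1]
        exact hg ⟨i, hil⟩ ⟨j, hjl⟩ ⟨k - 1, hk1⟩ hij' (by show j < k - 1; omega)
      · -- j is the new element x (the "x middle" case)
        subst hjT
        have hil : i < l.length := by omega
        have hk1 : k - 1 < l.length := by omega
        rw [hget1 i (by omega) hi hil, hget2 hj, hget3 k hkT hk hk1]
        have htk : (t : ℕ) < k - 1 := by omega
        have hkF : p (l.get ⟨k - 1, hk1⟩) x < p (l.get t) x := hlast ⟨k - 1, hk1⟩ htk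
        have hKk := K ⟨k - 1, hk1⟩ hkF
        have hstep : p (l.get ⟨i, hil⟩) (l.get ⟨k - 1, hk1⟩) ≤
            p (l.get t) (l.get ⟨k - 1, hk1⟩) := by
          rcases eq_or_lt_of_le (show i ≤ (t : ℕ) by omega) with h | h
          · exact le_of_eq (by rw [(Fin.ext h : (⟨i, hil⟩ : Fin l.length) = t)])
          · exact (hg ⟨i, hil⟩ t ⟨k - 1, hk1⟩ h htk).2
        have hgoal2 : p (l.get ⟨i, hil⟩) (l.get ⟨k - 1, hk1⟩) ≤ p x (l.get ⟨k - 1, hk1⟩) := by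
          calc p (l.get ⟨i, hil⟩) (l.get ⟨k - 1, hk1⟩)
              ≤ p (l.get t) (l.get ⟨k - 1, hk1⟩) := hstep
            _ = p (l.get ⟨k - 1, hk1⟩) (l.get t) := hsymm _ _
            _ = p (l.get ⟨k - 1, hk1⟩) x := hKk
            _ = p x (l.get ⟨k - 1, hk1⟩) := hsymm _ _
        refine ⟨?_, hgoal2⟩
        rcases eq_or_lt_of_le (hmax ⟨i, hil⟩) with hiF | hiF
        · calc p (l.get ⟨i, hil⟩) (l.get ⟨k - 1, hk1⟩)
              ≤ p x (l.get ⟨k - 1, hk1⟩) := hgoal2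
            _ = p (l.get ⟨k - 1, hk1⟩) x := hsymm _ _
            _ ≤ p (l.get t) x := hmax ⟨k - 1, hk1⟩
            _ = p (l.get ⟨i, hil⟩) x := hiF.symm
        · have hit : i < (t : ℕ) := by
            rcases eq_or_lt_of_le (show i ≤ (t : ℕ) by omega) with h | h
            · exact absurd (congrArg (fun z => p (l.get z) x)
                (Fin.ext h : (⟨i, hil⟩ : Fin l.length) = t)) hiF.ne
            · exact h
          calc p (l.get ⟨i, hil⟩) (l.get ⟨k - 1, hk1⟩)
              ≤ p (l.get ⟨i, hil⟩) (l.get t) := (hg ⟨i, hil⟩ t ⟨k - 1, hk1⟩ hit htk).1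
            _ = p (l.get ⟨i, hil⟩) x := K ⟨i, hil⟩ hiF
      · rcases lt_trichotomy i ((t : ℕ) + 1) with hiT | hiT | hiT
        · -- i ≤ t < x-position < j < k : x not involved
          have hil : i < l.length := by omega
          have hj1 : j - 1 < l.length := by omega
          have hk1 : k - 1 < l.length := by omega
          rw [hget1 i (by omega) hi hil, hget3 j hjT hj hj1, hget3 k (by omega) hk hk1]
          exact hg ⟨i, hil⟩ ⟨j - 1, hj1⟩ ⟨k - 1, hk1⟩ (by show i < j - 1; omega) (by show j - 1 < k - 1; omega)
        · -- i is the new element x (the "x first" case)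
          subst hiT
          have hj1 : j - 1 < l.length := by omega
          have hk1 : k - 1 < l.length := by omega
          rw [hget2 hi, hget3 j hjT hj hj1, hget3 k (by omega) hk hk1]
          have htj : (t : ℕ) < j - 1 := by omega
          have hjk1 : j - 1 < k - 1 := by omega
          have hjF := hlast ⟨j - 1, hj1⟩ htj
          have hkF := hlast ⟨k - 1, hk1⟩ (by show (t : ℕ) < k - 1; omega)
          have hKj := K ⟨j - 1, hj1⟩ hjF
          have hKk := K ⟨k - 1, hk1⟩ hkF
          have hgg := hg t ⟨j - 1, hj1⟩ ⟨k - 1, hk1⟩ htj hjk1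
          constructor
          · calc p x (l.get ⟨k - 1, hk1⟩) = p (l.get ⟨k - 1, hk1⟩) x := hsymm _ _
              _ = p (l.get ⟨k - 1, hk1⟩) (l.get t) := hKk.symm
              _ = p (l.get t) (l.get ⟨k - 1, hk1⟩) := hsymm _ _
              _ ≤ p (l.get t) (l.get ⟨j - 1, hj1⟩) := hgg.1
              _ = p (l.get ⟨j - 1, hj1⟩) (l.get t) := hsymm _ _
              _ = p (l.get ⟨j - 1, hj1⟩) x := hKj
              _ = p x (l.get ⟨j - 1, hj1⟩) := hsymm _ _
          · calc p x (l.get ⟨k - 1, hk1⟩) = p (l.get ⟨k - 1, hk1⟩) x := hsymm _ _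
              _ = p (l.get ⟨k - 1, hk1⟩) (l.get t) := hKk.symm
              _ = p (l.get t) (l.get ⟨k - 1, hk1⟩) := hsymm _ _
              _ ≤ p (l.get ⟨j - 1, hj1⟩) (l.get ⟨k - 1, hk1⟩) := hgg.2
        · -- all three above the insertion point
          have hi1 : i - 1 < l.length := by omega
          have hj1 : j - 1 < l.length := by omega
          have hk1 : k - 1 < l.length := by omega
          rw [hget3 i hiT hi hi1, hget3 j (by omega) hj hj1, hget3 k (by omega) hk hk1]
          exact hg ⟨i - 1, hi1⟩ ⟨j - 1, hj1⟩ ⟨k - 1, hk1⟩ (by show i - 1 < j - 1; omega) (by show j - 1 < k - 1; omega)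

end Stmt14

namespace Stmt14

lemma exists_good_perm {n : ℕ} {p : Fin n → Fin n → ℕ∞}
    (hsymm : ∀ i j, p i j = p j i)
    (hult : ∀ i j k : Fin n, MinTwice (p i j) (p j k) (p i k)) :
    ∀ xs : List (Fin n), ∃ l, l.Perm xs ∧ Good p l := by
  intro xs
  induction xs with
  | nil => exact ⟨[], List.Perm.refl _, fun i j k _ _ => i.elim0⟩
  | cons x xs ih =>
    obtain ⟨l, hperm, hgood⟩ := ih
    obtain ⟨m, hm, hgood'⟩ := exists_good_insert hsymm hult l hgood x
    exact ⟨l.insertIdx m x, (List.perm_insertIdx x l hm).trans (hperm.cons x), hgood'⟩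

end Stmt14

theorem stmt_14 (n : ℕ) (p : Fin n → Fin n → ℕ∞)
    (hsymm : ∀ i j, p i j = p j i)
    (hult : ∀ i j k : Fin n, MinTwice (p i j) (p j k) (p i k)) :
    ∃ σ : Equiv.Perm (Fin n), ∀ i j : Fin n, i < j →
      p (σ i) (σ j) =
        sInf {x : ℕ∞ | ∃ l : ℕ, (i : ℕ) ≤ l ∧ l < (j : ℕ) ∧
          ∃ (h1 : l < n) (h2 : l + 1 < n), x = p (σ ⟨l, h1⟩) (σ ⟨l + 1, h2⟩)} := by
  obtain ⟨l, hperm, hg⟩ := Stmt14.exists_good_perm hsymm hult (List.finRange n)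
  have hlen : l.length = n := by rw [hperm.length_eq, List.length_finRange]
  have hinj : Function.Injective
      (fun i : Fin n => l.get ⟨(i : ℕ), by rw [hlen]; exact i.isLt⟩) := by
    intro a b hab
    have hnd : l.Nodup := hperm.nodup_iff.mpr (List.nodup_finRange n)
    have h := List.nodup_iff_injective_get.mp hnd hab
    have h2 := congrArg (@Fin.val l.length) h
    exact Fin.ext h2
  refine ⟨Equiv.ofBijective _ (Finite.injective_iff_bijective.mp hinj), ?_⟩
  intro i j hij
  have hij' : (i : ℕ) < (j : ℕ) := hij
  have hjl : (j : ℕ) < l.length := by rw [hlen]; exact j.isLt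
  have hjn : (j : ℕ) < n := j.isLt
  apply le_antisymm
  · apply le_sInf
    rintro b ⟨c, hc1, hc2, h1, h2, rfl⟩
    exact Stmt14.good_chain_le hg (i : ℕ) c (j : ℕ) hc1 hc2 hjl
  · obtain ⟨c, hc1, hc2, hle⟩ := Stmt14.exists_consec_le hult l (j : ℕ) (i : ℕ) hij' hjl
    refine le_trans (sInf_le ?_) hle
    exact ⟨c, hc1, by omega, by omega, by omega, rfl⟩
end

section
/- Let G₁ be a solution for a vector d ∈ ℕ^n and suppose every coordinate of every vector in an auxiliary finite set G₀ ⊆ ℕ^(n+1), whenever two coordinates i < j differ, satisfies min(g[i], g[j]) ≥ min(d_i, ..., d_{j-1}). Then G₀ ∪ G₁ is also a solution for d. -/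
theorem stmt_17 (n : ℕ) (d : Fin n → ℕ) (G₀ G₁ : Finset (Fin (n + 1) → ℕ))
    (h₁ : IsSolution n d G₁)
    (h₀ : ∀ g ∈ G₀, ∀ i j : Fin (n + 1), i < j → g i ≠ g j →
      dMin n d i j ≤ min (g i) (g j)) :
    IsSolution n d (G₀ ∪ G₁) := by
  intro i j hij
  obtain ⟨⟨g₁, hg₁, hne₁⟩, hmin₁⟩ := h₁ i j hij
  refine ⟨⟨g₁, Finset.mem_union_right _ hg₁, hne₁⟩, ?_⟩
  have hmem : min (g₁ i) (g₁ j) ∈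
      {x : ℕ | ∃ g ∈ G₁, g i ≠ g j ∧ x = min (g i) (g j)} := ⟨g₁, hg₁, hne₁, rfl⟩
  unfold solMin
  apply le_antisymm
  · calc sInf {x : ℕ | ∃ g ∈ G₀ ∪ G₁, g i ≠ g j ∧ x = min (g i) (g j)}
        ≤ sInf {x : ℕ | ∃ g ∈ G₁, g i ≠ g j ∧ x = min (g i) (g j)} := by
          apply le_csInf ⟨_, hmem⟩
          rintro x ⟨g, hg, hne, rfl⟩
          exact Nat.sInf_le ⟨g, Finset.mem_union_right _ hg, hne, rfl⟩
      _ = dMin n d i j := hmin₁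
  · apply le_csInf (Set.nonempty_of_mem (show min (g₁ i) (g₁ j) ∈ {x : ℕ | ∃ g ∈ G₀ ∪ G₁, g i ≠ g j ∧ x = min (g i) (g j)} from ⟨g₁, Finset.mem_union_right _ hg₁, hne₁, rfl⟩))
    rintro x ⟨g, hg, hne, rfl⟩
    rcases Finset.mem_union.mp hg with hg | hg
    · exact h₀ g hg i j hij hne
    · rw [← hmin₁]; exact Nat.sInf_le ⟨g, hg, hne, rfl⟩
end

section
/- For all n ≥ 1, ⌈log₂(n+1)⌉ is the smallest t such that every vector d ∈ ℕ^n admits a solution of cardinality at most t. That is: (1) every d ∈ ℕ^n has a solution with at most ⌈log₂(n+1)⌉ vectors, and (2) there exists d ∈ ℕ^n (e.g., any constant vector) admitting no solution with fewer than ⌈log₂(n+1)⌉ vectors. -/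
noncomputable def rmin (D : ℕ → ℕ) (i j : ℕ) : ℕ :=
  sInf {x : ℕ | ∃ k, i ≤ k ∧ k < j ∧ x = D k}

lemma rmin_le {D : ℕ → ℕ} {i j k : ℕ} (h1 : i ≤ k) (h2 : k < j) : rmin D i j ≤ D k :=
  Nat.sInf_le ⟨k, h1, h2, rfl⟩

lemma rmin_exists {D : ℕ → ℕ} {i j : ℕ} (h : i < j) :
    ∃ k, i ≤ k ∧ k < j ∧ rmin D i j = D k := by
  have hne : {x : ℕ | ∃ k, i ≤ k ∧ k < j ∧ x = D k}.Nonempty := ⟨D i, i, le_rfl, h, rfl⟩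
  exact Nat.sInf_mem hne

lemma le_rmin {D : ℕ → ℕ} {i j c : ℕ} (h : i < j) (hc : ∀ k, i ≤ k → k < j → c ≤ D k) :
    c ≤ rmin D i j := by
  obtain ⟨k, h1, h2, h3⟩ := rmin_exists (D := D) h
  rw [h3]; exact hc k h1 h2

lemma rmin_mono {D : ℕ → ℕ} {a b i j : ℕ} (hai : a ≤ i) (hjb : j ≤ b) (hij : i < j) :
    rmin D a b ≤ rmin D i j := by
  obtain ⟨k, h1, h2, h3⟩ := rmin_exists (D := D) hij
  rw [h3]; exact rmin_le (hai.trans h1) (h2.trans_le hjb)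



lemma alloc : ∀ (t : ℕ) (S : Finset ℕ), S.card = t → ∀ (G : Finset ℕ) (n : ℕ → ℕ),
    (∀ g ∈ G, 1 ≤ n g) → (∑ g ∈ G, n g) ≤ 2 ^ t →
    ∃ O : ℕ → Finset ℕ, Set.InjOn O ↑G ∧ ∀ g ∈ G, O g ⊆ S ∧ n g ≤ 2 ^ (O g).card := by
  intro t
  induction t with
  | zero =>
    intro S hS G n hn hsum
    refine ⟨fun _ => ∅, ?_, ?_⟩
    · have hcard : G.card ≤ 1 := by
        have : G.card ≤ ∑ g ∈ G, n g := by
          rw [Finset.card_eq_sum_ones]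
          exact Finset.sum_le_sum hn
        omega
      intro g hg g' hg' _
      exact Finset.card_le_one.mp hcard g hg g' hg'
    · intro g hg
      refine ⟨Finset.empty_subset _, ?_⟩
      have := Finset.single_le_sum (f := n) (fun g _ => Nat.zero_le _) hg
      simpa using this.trans hsum
  | succ t IH =>
    intro S hS G n hn hsum
    have hSne : S.Nonempty := Finset.card_pos.mp (by omega)
    obtain ⟨s, hs⟩ := hSne
    set S' := S.erase s with hS'
    have hS'card : S'.card = t := by
      rw [hS', Finset.card_erase_of_mem hs, hS]; omega
    set H := 2 ^ t with hH
    have hHpos : 1 ≤ H := Nat.one_le_two_pow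
    -- maximal subset A with sum ≤ H
    set P := G.powerset.filter (fun A => (∑ g ∈ A, n g) ≤ H) with hP
    have hPne : P.Nonempty := ⟨∅, by
      simp only [hP, Finset.mem_filter, Finset.empty_mem_powerset, true_and,
        Finset.sum_empty]
      exact Nat.zero_le _⟩
    obtain ⟨A, hAP, hAmax⟩ := P.exists_max_image (fun A => ∑ g ∈ A, n g) hPne
    have hAG : A ⊆ G := Finset.mem_powerset.mp (Finset.mem_filter.mp hAP).1
    have hAH : (∑ g ∈ A, n g) ≤ H := (Finset.mem_filter.mp hAP).2
    set B := G \ A with hB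
    have hBG : B ⊆ G := Finset.sdiff_subset
    have hkey : ∀ g ∈ B, H < (∑ g ∈ A, n g) + n g := by
      intro g hgB
      by_contra hle
      push_neg at hle
      have hgG : g ∈ G := hBG hgB
      have hgA : g ∉ A := (Finset.mem_sdiff.mp hgB).2
      have hins : insert g A ∈ P := by
        rw [hP, Finset.mem_filter, Finset.mem_powerset]
        refine ⟨Finset.insert_subset hgG hAG, ?_⟩
        rw [Finset.sum_insert hgA]; omega
      have := hAmax _ hins
      rw [Finset.sum_insert hgA] at this
      have := hn g hgG
      omega
    have hGsum : (∑ g ∈ B, n g) + (∑ g ∈ A, n g) = ∑ g ∈ G, n g :=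
      Finset.sum_sdiff hAG
    -- key arithmetic: ∑_B (n+1)/2 ≤ H
    have hBsum : (∑ g ∈ B, (n g + 1) / 2) ≤ H := by
      have hdouble : 2 * (∑ g ∈ B, (n g + 1) / 2) ≤ (∑ g ∈ B, n g) + B.card := by
        rw [Finset.mul_sum, Finset.card_eq_sum_ones, ← Finset.sum_add_distrib]
        exact Finset.sum_le_sum (fun g _ => by omega)
      rcases Finset.eq_empty_or_nonempty B with hBe | hBne
      · simp [hBe]
      by_cases hk1 : B.card = 1
      · obtain ⟨g, hg⟩ := Finset.card_eq_one.mp hk1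
        have hs1 : (∑ g' ∈ B, (n g' + 1) / 2) = (n g + 1) / 2 := by
          rw [hg, Finset.sum_singleton]
        have hs2 : (∑ g' ∈ B, n g') = n g := by rw [hg, Finset.sum_singleton]
        have h2 : (2:ℕ) ^ (t+1) = 2 * H := by rw [hH, pow_succ]; ring
        omega
      -- now B.card ≥ 2
      have hk2 : 2 ≤ B.card := by
        have := Finset.card_pos.mpr hBne
        omega
      have h2H : (∑ g ∈ G, n g) ≤ 2 * H := by
        have h2 : (2:ℕ) ^ (t+1) = 2 * H := by rw [hH, pow_succ]; ring
        omega
      set σ := ∑ g ∈ A, n g with hσ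
      by_cases hσH : σ = H
      · -- slack 0 case
        have hBle : (∑ g ∈ B, n g) ≤ H := by omega
        have hcard : B.card ≤ ∑ g ∈ B, n g := by
          rw [Finset.card_eq_sum_ones]
          exact Finset.sum_le_sum (fun g hg => hn g (hBG hg))
        omega
      -- slack s ≥ 1
      have hσlt : σ < H := lt_of_le_of_ne hAH hσH
      set sl := H - σ with hsl
      have hsl1 : 1 ≤ sl := by omega
      have hlow : ∀ g ∈ B, sl + 1 ≤ n g := by
        intro g hg
        have := hkey g hg
        omega
      have hprod : B.card * (sl + 1) ≤ ∑ g ∈ B, n g := by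
        calc B.card * (sl + 1) = ∑ _g ∈ B, (sl + 1) := by
              rw [Finset.sum_const, smul_eq_mul]
          _ ≤ ∑ g ∈ B, n g := Finset.sum_le_sum hlow
      have hBup : (∑ g ∈ B, n g) ≤ H + sl := by omega
      have hslH : sl + 2 ≤ H := by nlinarith
      have hks : B.card + sl ≤ H + 1 := by
        have hmul : (B.card + sl) * (sl + 1) ≤ (H + 1) * (sl + 1) := by nlinarith
        exact Nat.le_of_mul_le_mul_right hmul (by omega)
      omega
    -- recursive calls
    obtain ⟨OA, hOAinj, hOA⟩ := IH S' hS'card A n (fun g hg => hn g (hAG hg)) hAH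
    obtain ⟨OB, hOBinj, hOB⟩ := IH S' hS'card B (fun g => (n g + 1) / 2)
      (fun g hg => by have := hn g (hBG hg); show 1 ≤ (n g + 1) / 2; omega) hBsum
    refine ⟨fun g => if g ∈ A then OA g else insert s (OB g), ?_, ?_⟩
    · intro g hg g' hg' heq
      simp only at heq
      by_cases hgA : g ∈ A <;> by_cases hg'A : g' ∈ A
      · rw [if_pos hgA, if_pos hg'A] at heq
        exact hOAinj (by exact_mod_cast hgA) (by exact_mod_cast hg'A) heq
      · rw [if_pos hgA, if_neg hg'A] at heq
        exfalso
        have hsin : s ∈ OA g := heq ▸ Finset.mem_insert_self s (OB g')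
        exact Finset.notMem_erase s S ((hOA g hgA).1 hsin)
      · rw [if_neg hgA, if_pos hg'A] at heq
        exfalso
        have hsin : s ∈ OA g' := heq ▸ Finset.mem_insert_self s (OB g)
        exact Finset.notMem_erase s S ((hOA g' hg'A).1 hsin)
      · rw [if_neg hgA, if_neg hg'A] at heq
        have hgB : g ∈ B := Finset.mem_sdiff.mpr ⟨by exact_mod_cast hg, hgA⟩
        have hg'B : g' ∈ B := Finset.mem_sdiff.mpr ⟨by exact_mod_cast hg', hg'A⟩
        have hns : s ∉ OB g := fun h => Finset.notMem_erase s S ((hOB g hgB).1 h)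
        have hns' : s ∉ OB g' := fun h => Finset.notMem_erase s S ((hOB g' hg'B).1 h)
        have : OB g = OB g' := by
          have := congrArg (fun X => X.erase s) heq
          simpa [Finset.erase_insert hns, Finset.erase_insert hns'] using this
        exact hOBinj (by exact_mod_cast hgB) (by exact_mod_cast hg'B) this
    · intro g hg
      dsimp only
      by_cases hgA : g ∈ A
      · rw [if_pos hgA]
        exact ⟨(hOA g hgA).1.trans (Finset.erase_subset s S), (hOA g hgA).2⟩
      · rw [if_neg hgA]
        have hgB : g ∈ B := Finset.mem_sdiff.mpr ⟨hg, hgA⟩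
        have hns : s ∉ OB g := fun h => Finset.notMem_erase s S ((hOB g hgB).1 h)
        refine ⟨Finset.insert_subset hs ((hOB g hgB).1.trans (Finset.erase_subset s S)), ?_⟩
        rw [Finset.card_insert_of_notMem hns, pow_succ]
        have := (hOB g hgB).2
        omega

lemma cons (E : ℕ) : ∀ (D : ℕ → ℕ) (M a b : ℕ) (S : Finset ℕ),
    (∀ k, D k < M) → b - a = E → a ≤ b → b - a + 1 ≤ 2 ^ S.card →
    ∃ x : ℕ → ℕ → ℕ,
      (∀ s p, s ∉ S → x s p = M) ∧
      (∀ s p, p < a ∨ b < p → x s p = M) ∧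
      (∀ s p, x s p = M ∨ (a < b ∧ rmin D a b ≤ x s p)) ∧
      (∀ s i j, a ≤ i → i < j → j ≤ b → x s i ≠ x s j → rmin D i j ≤ min (x s i) (x s j)) ∧
      (∀ i j, a ≤ i → i < j → j ≤ b → ∃ s, x s i ≠ x s j ∧ min (x s i) (x s j) = rmin D i j) := by
  induction E using Nat.strong_induction_on with
  | _ E IH =>
  intro D M a b S hM hE hab hcap
  rcases eq_or_lt_of_le hab with heq | hlt
  · -- trivial case a = b
    refine ⟨fun _ _ => M, fun _ _ _ => rfl, fun _ _ _ => rfl, fun _ _ => Or.inl rfl,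
      fun s i j hai hij hjb _ => absurd hij (by omega),
      fun i j hai hij hjb => absurd hij (by omega)⟩
  -- main case
  set v := rmin D a b with hv
  obtain ⟨c0, hc0a, hc0b, hc0⟩ := rmin_exists (D := D) hlt
  have hvM : v < M := by rw [hv, hc0]; exact hM c0
  -- gap start
  set gs : ℕ → ℕ := fun p => Nat.findGreatest (fun q => q = a ∨ (a < q ∧ D (q - 1) = v)) p
    with hgsdef
  have hgs_le : ∀ p, gs p ≤ p := fun p =>
    Nat.findGreatest_le (P := fun q => q = a ∨ (a < q ∧ D (q - 1) = v)) p
  have hgs_ge : ∀ p, a ≤ p → a ≤ gs p := fun p hp =>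
    Nat.le_findGreatest (P := fun q => q = a ∨ (a < q ∧ D (q - 1) = v)) hp (Or.inl rfl)
  have hgs_prop : ∀ p, a ≤ p → (gs p = a ∨ (a < gs p ∧ D (gs p - 1) = v)) := fun p hp =>
    Nat.findGreatest_spec (P := fun q => q = a ∨ (a < q ∧ D (q - 1) = v)) hp (Or.inl rfl)
  have hgs_max : ∀ p k, gs p < k → k ≤ p → ¬(k = a ∨ (a < k ∧ D (k - 1) = v)) := fun p k h1 h2 =>
    Nat.findGreatest_is_greatest (P := fun q => q = a ∨ (a < q ∧ D (q - 1) = v)) h1 h2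
  have hint1 : ∀ p k, a ≤ p → gs p ≤ k → k < p → D k ≠ v := by
    intro p k hap h1 h2 hDk
    have hga := hgs_ge p hap
    exact hgs_max p (k + 1) (by omega) (by omega) (Or.inr ⟨by omega, by simpa using hDk⟩)
  have hgs_mono : ∀ p q, a ≤ p → p ≤ q → gs p ≤ gs q := fun p q hap hpq =>
    Nat.le_findGreatest (P := fun q => q = a ∨ (a < q ∧ D (q - 1) = v))
      ((hgs_le p).trans hpq) (hgs_prop p hap)
  have hgs_fix : ∀ g, a ≤ g → (g = a ∨ (a < g ∧ D (g - 1) = v)) → gs g = g := fun g hg hP =>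
    le_antisymm (hgs_le g)
      (Nat.le_findGreatest (P := fun q => q = a ∨ (a < q ∧ D (q - 1) = v)) le_rfl hP)
  -- gap end
  have hex : ∀ p : ℕ, ∃ r, (p ≤ r ∧ (r = b ∨ D r = v)) ∨ b < p := by
    intro p
    rcases le_or_gt p b with h | h
    · exact ⟨b, Or.inl ⟨h, Or.inl rfl⟩⟩
    · exact ⟨0, Or.inr h⟩
  set ge' : ℕ → ℕ := fun p => Nat.find (hex p) with hgedef
  have hge1 : ∀ p, p ≤ b → p ≤ ge' p ∧ (ge' p = b ∨ D (ge' p) = v) := by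
    intro p hp
    have := Nat.find_spec (hex p)
    rcases this with h | h
    · exact h
    · omega
  have hgeb : ∀ p, p ≤ b → ge' p ≤ b := fun p hp =>
    Nat.find_min' (hex p) (Or.inl ⟨hp, Or.inl rfl⟩)
  have hgemin : ∀ p k, p ≤ b → p ≤ k → k < ge' p → D k ≠ v ∧ k ≠ b := by
    intro p k hpb h1 h2
    have h3 := Nat.find_min (hex p) h2
    push_neg at h3
    exact ⟨(h3.1 h1).2, (h3.1 h1).1⟩
  -- p ≤ ge' (gs p)
  have hp_le_ge : ∀ p, a ≤ p → p ≤ b → p ≤ ge' (gs p) := by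
    intro p hap hpb
    by_contra h
    push_neg at h
    have hgsb : gs p ≤ b := (hgs_le p).trans hpb
    have h1 := (hge1 (gs p) hgsb).1
    have h2 := (hge1 (gs p) hgsb).2
    rcases h2 with h2 | h2
    · omega
    · exact hint1 p (ge' (gs p)) hap h1 h h2
  -- same gap: j ≤ ge' (gs i)
  have hgap_in : ∀ i j, a ≤ i → i ≤ j → j ≤ b → gs i = gs j → j ≤ ge' (gs i) := by
    intro i j hai hij hjb hg
    by_contra h
    push_neg at h
    have haj : a ≤ j := by omega
    have hgsb : gs i ≤ b := (hgs_le i).trans (by omega)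
    have hgeip := hp_le_ge i hai (by omega)
    have h2 := (hge1 (gs i) hgsb).2
    rcases h2 with h2 | h2
    · omega
    · -- D (ge' (gs i)) = v with ge' (gs i) ∈ [i, j): so gs j ≥ ge' (gs i) + 1 > gs i
      have hP : (ge' (gs i) + 1 = a ∨ (a < ge' (gs i) + 1 ∧ D (ge' (gs i) + 1 - 1) = v)) :=
        Or.inr ⟨by omega, by simpa using h2⟩
      have h5 : ge' (gs i) + 1 ≤ gs j :=
        Nat.le_findGreatest (P := fun q => q = a ∨ (a < q ∧ D (q - 1) = v))
          (show ge' (gs i) + 1 ≤ j by omega) hP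
      have h6 := hgs_le j
      have h7 := hgs_le i
      omega
  -- separation: different gaps give a v-edge
  have hgap_sep : ∀ i j, a ≤ i → i < j → j ≤ b → gs i ≠ gs j →
      i < gs j ∧ a < gs j ∧ D (gs j - 1) = v := by
    intro i j hai hij hjb hne
    have hmono := hgs_mono i j hai (le_of_lt hij)
    have hlt' : gs i < gs j := lt_of_le_of_ne hmono hne
    have higsj : i < gs j := by
      by_contra h
      push_neg at h
      have h6 : gs j ≤ gs i :=
        Nat.le_findGreatest (P := fun q => q = a ∨ (a < q ∧ D (q - 1) = v)) h
          (hgs_prop j (by omega))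
      omega
    have hgja : a < gs j := lt_of_le_of_lt hai higsj
    rcases hgs_prop j (by omega) with h | h
    · omega
    · exact ⟨higsj, hgja, h.2⟩
  -- cross-gap range min is v
  have hcross : ∀ i j, a ≤ i → i < j → j ≤ b → gs i ≠ gs j → rmin D i j = v := by
    intro i j hai hij hjb hne
    obtain ⟨h1, h2, h3⟩ := hgap_sep i j hai hij hjb hne
    have hgsj := hgs_le j
    refine le_antisymm ?_ ?_
    · have := rmin_le (D := D) (show i ≤ gs j - 1 by omega) (show gs j - 1 < j by omega)
      rw [h3] at this; exact this
    · rw [hv]; exact rmin_mono hai hjb hij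
  -- strictness of gap minima
  have hstrict : ∀ g, a ≤ g → g ≤ b → g < ge' g → v < rmin D g (ge' g) := by
    intro g hag hgb hlt'
    obtain ⟨k, h1, h2, h3⟩ := rmin_exists (D := D) hlt'
    have hkv := (hgemin g k hgb h1 h2).1
    have : v ≤ D k := by
      rw [hv]; exact rmin_le (hag.trans h1) (lt_of_lt_of_le h2 (hgeb g hgb))
    rw [h3]; omega
  -- the gap set
  set G : Finset ℕ := (Finset.Icc a b).filter (fun q => q = a ∨ (a < q ∧ D (q - 1) = v))
    with hGdef
  have hGmem : ∀ p, a ≤ p → p ≤ b → gs p ∈ G := by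
    intro p h1 h2
    rw [hGdef, Finset.mem_filter, Finset.mem_Icc]
    exact ⟨⟨hgs_ge p h1, (hgs_le p).trans h2⟩, hgs_prop p h1⟩
  have hGfacts : ∀ g ∈ G, a ≤ g ∧ g ≤ b ∧ gs g = g := by
    intro g hg
    rw [hGdef, Finset.mem_filter, Finset.mem_Icc] at hg
    exact ⟨hg.1.1, hg.1.2, hgs_fix g hg.1.1 hg.2⟩
  -- gap length bound
  have hlen : ∀ g ∈ G, ge' g - g < E := by
    intro g hg
    obtain ⟨h1, h2, _⟩ := hGfacts g hg
    have hgeg := hgeb g h2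
    rcases lt_or_ge c0 g with h | h
    · omega
    · have : ¬ (c0 < ge' g) := by
        intro hc
        exact (hgemin g c0 h2 h hc).1 hc0.symm
      omega
  -- disjointness and sum bound
  have hsep : ∀ g ∈ G, ∀ g' ∈ G, g < g' → ge' g < g' := by
    intro g hg g' hg' hlt'
    obtain ⟨h1, h2, _⟩ := hGfacts g hg
    obtain ⟨h1', h2', _⟩ := hGfacts g' hg'
    rw [hGdef, Finset.mem_filter] at hg'
    rcases hg'.2 with h | h
    · omega
    · by_contra hcon
      push_neg at hcon
      exact (hgemin g (g' - 1) h2 (by omega) (by omega)).1 h.2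
  have hsum : (∑ g ∈ G, (ge' g - g + 1)) ≤ b - a + 1 := by
    have hdisj : ∀ g ∈ G, ∀ g' ∈ G, g ≠ g' →
        Disjoint (Finset.Icc g (ge' g)) (Finset.Icc g' (ge' g')) := by
      intro g hg g' hg' hne
      rw [Finset.disjoint_left]
      intro x hx hx'
      rw [Finset.mem_Icc] at hx hx'
      rcases lt_or_gt_of_ne hne with h | h
      · have := hsep g hg g' hg' h; omega
      · have := hsep g' hg' g hg h; omega
    calc (∑ g ∈ G, (ge' g - g + 1)) = ∑ g ∈ G, (Finset.Icc g (ge' g)).card := by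
          refine Finset.sum_congr rfl (fun g hg => ?_)
          rw [Nat.card_Icc]
          have := (hge1 g (hGfacts g hg).2.1).1
          omega
      _ = (G.biUnion (fun g => Finset.Icc g (ge' g))).card :=
          (Finset.card_biUnion hdisj).symm
      _ ≤ (Finset.Icc a b).card := by
          apply Finset.card_le_card
          intro x hx
          rw [Finset.mem_biUnion] at hx
          obtain ⟨g, hg, hx⟩ := hx
          rw [Finset.mem_Icc] at hx ⊢
          obtain ⟨h1, h2, _⟩ := hGfacts g hg
          have := hgeb g h2
          omega
      _ = b - a + 1 := by rw [Nat.card_Icc]; omega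
  -- allocate slot sets to gaps
  obtain ⟨O, hOinj, hOprop⟩ := alloc S.card S rfl G (fun g => ge' g - g + 1)
    (fun g _ => by show 1 ≤ ge' g - g + 1; omega) (le_trans hsum hcap)
  -- recursive construction on each gap
  have hch : ∀ g ∈ G, ∃ y : ℕ → ℕ → ℕ,
      (∀ s p, s ∉ O g → y s p = M) ∧
      (∀ s p, p < g ∨ ge' g < p → y s p = M) ∧
      (∀ s p, y s p = M ∨ (g < ge' g ∧ rmin D g (ge' g) ≤ y s p)) ∧
      (∀ s i j, g ≤ i → i < j → j ≤ ge' g → y s i ≠ y s j →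
        rmin D i j ≤ min (y s i) (y s j)) ∧
      (∀ i j, g ≤ i → i < j → j ≤ ge' g → ∃ s, y s i ≠ y s j ∧
        min (y s i) (y s j) = rmin D i j) := by
    intro g hg
    obtain ⟨h1, h2, _⟩ := hGfacts g hg
    exact IH (ge' g - g) (hlen g hg) D M g (ge' g) (O g) hM rfl
      (hge1 g h2).1 (hOprop g hg).2
  choose! Y hY using hch
  -- the assembled family
  set x : ℕ → ℕ → ℕ := fun s p =>
    if s ∈ S ∧ a ≤ p ∧ p ≤ b then (if s ∈ O (gs p) then Y (gs p) s p else v) else M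
    with hxdef
  have hxM1 : ∀ s p, s ∉ S → x s p = M := by
    intro s p hs
    simp only [hxdef]
    rw [if_neg (by tauto)]
  have hxM2 : ∀ s p, p < a ∨ b < p → x s p = M := by
    intro s p hp
    simp only [hxdef]
    rw [if_neg (by rcases hp with h | h <;> omega)]
  have hxY : ∀ s p, s ∈ S → a ≤ p → p ≤ b → s ∈ O (gs p) → x s p = Y (gs p) s p := by
    intro s p h1 h2 h3 h4
    simp only [hxdef]
    rw [if_pos ⟨h1, h2, h3⟩, if_pos h4]
  have hxv : ∀ s p, s ∈ S → a ≤ p → p ≤ b → s ∉ O (gs p) → x s p = v := by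
    intro s p h1 h2 h3 h4
    simp only [hxdef]
    rw [if_pos ⟨h1, h2, h3⟩, if_neg h4]
  -- value lower bound
  have hP3 : ∀ s p, x s p = M ∨ (a < b ∧ rmin D a b ≤ x s p) := by
    intro s p
    by_cases h1 : s ∈ S
    · by_cases h2 : a ≤ p ∧ p ≤ b
      · have hgG := hGmem p h2.1 h2.2
        by_cases h3 : s ∈ O (gs p)
        · rw [hxY s p h1 h2.1 h2.2 h3]
          rcases ((hY (gs p) hgG).2.2.1 s p) with h | h
          · exact Or.inl h
          · refine Or.inr ⟨hlt, ?_⟩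
            obtain ⟨hg1, hg2, _⟩ := hGfacts (gs p) hgG
            calc rmin D a b ≤ rmin D (gs p) (ge' (gs p)) :=
                  rmin_mono hg1 (hgeb (gs p) hg2) h.1
              _ ≤ Y (gs p) s p := h.2
        · rw [hxv s p h1 h2.1 h2.2 h3]
          exact Or.inr ⟨hlt, le_rfl⟩
      · push_neg at h2
        refine Or.inl (hxM2 s p ?_)
        by_cases h : a ≤ p
        · exact Or.inr (h2 h)
        · exact Or.inl (by omega)
    · exact Or.inl (hxM1 s p h1)
  have hvle : ∀ s p, v ≤ x s p := by
    intro s p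
    rcases hP3 s p with h | h
    · omega
    · exact h.2
  refine ⟨x, hxM1, hxM2, hP3, ?_, ?_⟩
  · -- safety
    intro s i j hai hij hjb hne
    have hib : i ≤ b := by omega
    have haj : a ≤ j := by omega
    have hsS : s ∈ S := by
      by_contra h
      rw [hxM1 s i h, hxM1 s j h] at hne
      exact hne rfl
    by_cases hg : gs i = gs j
    · have hgG := hGmem i hai hib
      by_cases hsO : s ∈ O (gs i)
      · have hxi := hxY s i hsS hai hib hsO
        have hxj := hxY s j hsS haj hjb (by rw [← hg]; exact hsO)
        rw [← hg] at hxj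
        rw [hxi, hxj]
        rw [hxi, hxj] at hne
        exact (hY (gs i) hgG).2.2.2.1 s i j (hgs_le i) hij
          (hgap_in i j hai (le_of_lt hij) hjb hg) hne
      · have hxi := hxv s i hsS hai hib hsO
        have hxj := hxv s j hsS haj hjb (by rw [← hg]; exact hsO)
        rw [hxi, hxj] at hne
        exact absurd rfl hne
    · rw [hcross i j hai hij hjb hg]
      exact le_min (hvle s i) (hvle s j)
  · -- exactness
    intro i j hai hij hjb
    have hib : i ≤ b := by omega
    have haj : a ≤ j := by omega
    by_cases hg : gs i = gs j
    · have hgG := hGmem i hai hib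
      obtain ⟨s, hsne, hsmin⟩ := (hY (gs i) hgG).2.2.2.2 i j (hgs_le i) hij
        (hgap_in i j hai (le_of_lt hij) hjb hg)
      have hsO : s ∈ O (gs i) := by
        by_contra h
        rw [(hY (gs i) hgG).1 s i h, (hY (gs i) hgG).1 s j h] at hsne
        exact hsne rfl
      have hsS : s ∈ S := (hOprop (gs i) hgG).1 hsO
      have hxi := hxY s i hsS hai hib hsO
      have hxj := hxY s j hsS haj hjb (by rw [← hg]; exact hsO)
      rw [← hg] at hxj
      exact ⟨s, by rw [hxi, hxj]; exact hsne, by rw [hxi, hxj]; exact hsmin⟩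
    · have hgiG := hGmem i hai hib
      have hgjG := hGmem j haj hjb
      have hOne : O (gs i) ≠ O (gs j) := by
        intro h
        exact hg (hOinj (by exact_mod_cast hgiG) (by exact_mod_cast hgjG) h)
      have hrm := hcross i j hai hij hjb hg
      have hsx : ∃ s, (s ∈ O (gs j) ∧ s ∉ O (gs i)) ∨ (s ∈ O (gs i) ∧ s ∉ O (gs j)) := by
        by_contra hcon
        push_neg at hcon
        apply hOne
        apply Finset.ext
        intro s
        have h9 := hcon s
        tauto
      obtain ⟨s, hcase⟩ := hsx
      rcases hcase with ⟨hs1, hs2⟩ | ⟨hs1, hs2⟩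
      · -- s ∈ O (gs j) \ O (gs i) : x s i = v, x s j = Y (gs j) s j ≠ v
        have hsS : s ∈ S := (hOprop (gs j) hgjG).1 hs1
        have hxi := hxv s i hsS hai hib hs2
        have hxj := hxY s j hsS haj hjb hs1
        have hYj : v < Y (gs j) s j ∨ Y (gs j) s j = M := by
          rcases ((hY (gs j) hgjG).2.2.1 s j) with h | h
          · exact Or.inr h
          · obtain ⟨hg1, hg2, _⟩ := hGfacts (gs j) hgjG
            exact Or.inl (lt_of_lt_of_le (hstrict (gs j) hg1 hg2 h.1) h.2)
        have hylv : v < Y (gs j) s j := by rcases hYj with h | h <;> omega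
        refine ⟨s, ?_, ?_⟩
        · rw [hxi, hxj]; omega
        · rw [hxi, hxj, hrm]
          omega
      · -- s ∈ O (gs i) \ O (gs j) : x s j = v, x s i = Y (gs i) s i ≠ v
        have hsS : s ∈ S := (hOprop (gs i) hgiG).1 hs1
        have hxj := hxv s j hsS haj hjb hs2
        have hxi := hxY s i hsS hai hib hs1
        have hYi : v < Y (gs i) s i ∨ Y (gs i) s i = M := by
          rcases ((hY (gs i) hgiG).2.2.1 s i) with h | h
          · exact Or.inr h
          · obtain ⟨hg1, hg2, _⟩ := hGfacts (gs i) hgiG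
            exact Or.inl (lt_of_lt_of_le (hstrict (gs i) hg1 hg2 h.1) h.2)
        have hylv : v < Y (gs i) s i := by rcases hYi with h | h <;> omega
        refine ⟨s, ?_, ?_⟩
        · rw [hxi, hxj]; omega
        · rw [hxi, hxj, hrm]
          omega

theorem stmt_18 (n : ℕ) (hn : 1 ≤ n) :
    (∀ d : Fin n → ℕ, ∃ G : Finset (Fin (n + 1) → ℕ),
        IsSolution n d G ∧ G.card ≤ Nat.clog 2 (n + 1)) ∧
    (∃ d : Fin n → ℕ, ∀ G : Finset (Fin (n + 1) → ℕ),
        IsSolution n d G → Nat.clog 2 (n + 1) ≤ G.card) := by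
  constructor
  · -- upper bound
    intro d
    set t := Nat.clog 2 (n + 1) with ht
    set D : ℕ → ℕ := fun k => if h : k < n then d ⟨k, h⟩ else 0 with hD
    set M : ℕ := (Finset.univ.sup d) + 1 with hMdef
    have hDM : ∀ k, D k < M := by
      intro k
      rw [hD]
      dsimp only
      split
      · exact Nat.lt_succ_of_le (Finset.le_sup (Finset.mem_univ _))
      · omega
    have hcap : n - 0 + 1 ≤ 2 ^ (Finset.range t).card := by
      rw [Finset.card_range]
      have := Nat.le_pow_clog (by norm_num : 1 < 2) (n + 1)
      rw [← ht] at this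
      omega
    obtain ⟨x, hx1, hx2, hx3, hx4, hx5⟩ :=
      cons n D M 0 n (Finset.range t) hDM (by omega) (Nat.zero_le n) hcap
    refine ⟨(Finset.range t).image (fun s => fun i : Fin (n + 1) => x s i.val), ?_, ?_⟩
    · intro i j hij
      have hijn : (i : ℕ) < (j : ℕ) := hij
      have hjn : (j : ℕ) ≤ n := Nat.lt_succ_iff.mp j.isLt
      have hdm : dMin n d i j = rmin D (i : ℕ) (j : ℕ) := by
        unfold dMin rmin
        congr 1
        ext m
        simp only [Set.mem_setOf_eq]
        constructor
        · rintro ⟨k, h1, h2, h3⟩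
          refine ⟨k.val, h1, h2, ?_⟩
          rw [h3, hD]
          simp only [k.isLt, dif_pos, Fin.eta]
        · rintro ⟨k, h1, h2, h3⟩
          have hkn : k < n := by omega
          refine ⟨⟨k, hkn⟩, h1, h2, ?_⟩
          rw [h3, hD]
          simp only [hkn, dif_pos]
      obtain ⟨s, hsne, hsmin⟩ := hx5 i.val j.val (Nat.zero_le _) hijn hjn
      have hsS : s ∈ Finset.range t := by
        by_contra h
        rw [hx1 s _ h, hx1 s _ h] at hsne
        exact hsne rfl
      have hmemG : (fun i : Fin (n + 1) => x s i.val) ∈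
          (Finset.range t).image (fun s => fun i : Fin (n + 1) => x s i.val) :=
        Finset.mem_image_of_mem _ hsS
      refine ⟨⟨fun i : Fin (n + 1) => x s i.val, hmemG, hsne⟩, ?_⟩
      rw [hdm]
      unfold solMin
      apply le_antisymm
      · apply Nat.sInf_le
        simp only [Set.mem_setOf_eq]
        exact ⟨fun i : Fin (n + 1) => x s i.val, hmemG, hsne, hsmin.symm⟩
      · apply le_csInf
        · refine ⟨min (x s i.val) (x s j.val), ?_⟩
          simp only [Set.mem_setOf_eq]
          exact ⟨fun i : Fin (n + 1) => x s i.val, hmemG, hsne, rfl⟩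
        · rintro m hm
          simp only [Set.mem_setOf_eq] at hm
          obtain ⟨g, hgG, hgne, hgm⟩ := hm
          obtain ⟨s', _, hgeq⟩ := Finset.mem_image.mp hgG
          subst hgeq
          rw [hgm]
          exact hx4 s' i.val j.val (Nat.zero_le _) hijn hjn hgne
    · exact (Finset.card_image_le).trans (by rw [Finset.card_range])
  · -- lower bound : constant 0 vector
    refine ⟨fun _ => 0, ?_⟩
    intro G hG
    have key : ∀ i j : Fin (n + 1), i < j → ∃ g ∈ G, g i ≠ g j ∧ min (g i) (g j) = 0 := by
      intro i j hij
      obtain ⟨hne, heq⟩ := hG i j hij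
      have hin : (i : ℕ) < n := by
        have : (j : ℕ) ≤ n := Nat.lt_succ_iff.mp j.isLt
        have : (i : ℕ) < (j : ℕ) := hij
        omega
      have hdm0 : dMin n (fun _ => 0) i j = 0 := by
        unfold dMin
        refine Nat.sInf_eq_zero.mpr (Or.inl ?_)
        exact ⟨⟨(i : ℕ), hin⟩, le_rfl, hij, rfl⟩
      have hsol0 : solMin n G i j = 0 := heq.trans hdm0
      have hAne : {x : ℕ | ∃ g ∈ G, g i ≠ g j ∧ x = min (g i) (g j)}.Nonempty := by
        obtain ⟨g, hg, hgne⟩ := hne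
        exact ⟨min (g i) (g j), g, hg, hgne, rfl⟩
      have hmem := Nat.sInf_mem hAne
      rw [show sInf {x : ℕ | ∃ g ∈ G, g i ≠ g j ∧ x = min (g i) (g j)} = solMin n G i j from rfl,
        hsol0] at hmem
      obtain ⟨g, hg, hgne, hg0⟩ := hmem
      exact ⟨g, hg, hgne, hg0.symm⟩
    have hinj : Function.Injective
        (fun i : Fin (n + 1) => (fun g : {g // g ∈ G} => decide (g.1 i = 0))) := by
      intro i j hfeq
      by_contra hne
      have hwlog : ∀ i j : Fin (n + 1), i < j →
          (fun g : {g // g ∈ G} => decide (g.1 i = 0)) =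
            (fun g : {g // g ∈ G} => decide (g.1 j = 0)) → False := by
        intro i j hij hfe
        obtain ⟨g, hg, hgne, hgmin⟩ := key i j hij
        have hd := congrFun hfe ⟨g, hg⟩
        simp only [decide_eq_decide] at hd
        rcases Nat.min_eq_zero_iff.mp hgmin with h0 | h0
        · exact hgne (by rw [h0, hd.mp h0])
        · exact hgne (by rw [h0, hd.mpr h0])
      rcases lt_trichotomy i j with h | h | h
      · exact hwlog i j h hfeq
      · exact hne h
      · exact hwlog j i h hfeq.symm
    have hcard := Fintype.card_le_of_injective _ hinj
    rw [Fintype.card_fin] at hcard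
    have hcard2 : Fintype.card ({g // g ∈ G} → Bool) = 2 ^ G.card := by
      rw [Fintype.card_fun, Fintype.card_coe, Fintype.card_bool]
    rw [hcard2] at hcard
    exact (Nat.clog_le_iff_le_pow (by norm_num)).mpr hcard
end

section
/- Let N ≥ 1 and let a multiset of requirements m_1, ..., m_r with each 1 ≤ m_p ≤ N be given, where for each m, the number of indices p with m_p ≥ m is at most ∑_{k=m}^N binom(N,k). Then there exist pairwise distinct vectors t_1, ..., t_r ∈ {0,1}^N such that the number of ones in t_p is at least m_p for every p. -/
open Finset

theorem stmt_19 (N r : ℕ) (hN : 1 ≤ N) (m : Fin r → ℕ)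
    (hm : ∀ p, 1 ≤ m p ∧ m p ≤ N)
    (hcount : ∀ mm : ℕ,
      (Finset.univ.filter (fun p : Fin r => mm ≤ m p)).card ≤
        ∑ k ∈ Finset.Icc mm N, N.choose k) :
    ∃ t : Fin r → (Fin N → Bool), Function.Injective t ∧
      ∀ p, m p ≤ (Finset.univ.filter (fun i : Fin N => t p i = true)).card := by
  classical
  set wt : (Fin N → Bool) → ℕ := fun v => (univ.filter (fun i => v i = true)).card with hwt
  have hwtle : ∀ v, wt v ≤ N := fun v => le_trans (card_filter_le _ _) (by simp)
  have hfiber : ∀ k, (univ.filter (fun v : Fin N → Bool => wt v = k)).card = N.choose k := by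
    intro k
    have : (univ.filter (fun v : Fin N → Bool => wt v = k)).card
        = (Finset.powersetCard k (univ : Finset (Fin N))).card := by
      apply Finset.card_bij (fun v _ => univ.filter (fun i => v i = true))
      · intro v hv
        simp only [mem_filter, mem_univ, true_and] at hv
        rw [mem_powersetCard]
        exact ⟨subset_univ _, hv⟩
      · intro v hv v' hv' h
        funext i
        have := Finset.ext_iff.mp h i
        simp only [mem_filter, mem_univ, true_and] at this
        cases hvi : v i <;> cases hv'i : v' i <;> simp_all
      · intro s hs
        rw [mem_powersetCard] at hs
        refine ⟨fun i => decide (i ∈ s), ?_, ?_⟩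
        · simp only [mem_filter, mem_univ, true_and, hwt]
          rw [← hs.2]; congr 1; ext i; simp
        · ext i; simp
    rw [this, Finset.card_powersetCard, card_univ, Fintype.card_fin]
  have hcard : ∀ mm : ℕ, (univ.filter (fun v : Fin N → Bool => mm ≤ wt v)).card
      = ∑ k ∈ Icc mm N, N.choose k := by
    intro mm
    have hsplit : (univ.filter (fun v : Fin N → Bool => mm ≤ wt v))
        = (Icc mm N).biUnion (fun k => univ.filter (fun v => wt v = k)) := by
      ext v
      simp only [mem_filter, mem_biUnion, mem_Icc, mem_univ, true_and]
      constructor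
      · intro h; exact ⟨wt v, ⟨h, hwtle v⟩, rfl⟩
      · rintro ⟨k, ⟨h1, _⟩, rfl⟩; exact h1
    rw [hsplit, Finset.card_biUnion]
    · exact Finset.sum_congr rfl fun k _ => hfiber k
    · intro a _ b _ hab
      simp only [Finset.disjoint_left, mem_filter, mem_univ, true_and]
      rintro v h1 h2
      exact hab (h1.symm.trans h2)
  have hall : ∀ s : Finset (Fin r), s.card ≤
      (s.biUnion (fun p : Fin r => univ.filter (fun v : Fin N → Bool => m p ≤ wt v))).card := by
    intro s
    rcases s.eq_empty_or_nonempty with rfl | hs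
    · simp
    obtain ⟨p₀, hp₀, hmin⟩ := Finset.exists_mem_eq_inf' hs m
    set mm := s.inf' hs m with hmm
    calc s.card ≤ (univ.filter (fun p : Fin r => mm ≤ m p)).card := by
          apply Finset.card_le_card
          intro p hp
          simp only [mem_filter, mem_univ, true_and]
          exact Finset.inf'_le m hp
      _ ≤ ∑ k ∈ Icc mm N, N.choose k := hcount mm
      _ = (univ.filter (fun v : Fin N → Bool => mm ≤ wt v)).card := (hcard mm).symm
      _ ≤ (s.biUnion (fun p : Fin r => univ.filter (fun v : Fin N → Bool => m p ≤ wt v))).card := by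
          apply Finset.card_le_card
          intro v hv
          rw [mem_biUnion]
          exact ⟨p₀, hp₀, by rw [mem_filter] at hv ⊢; exact ⟨hv.1, hmin ▸ hv.2⟩⟩
  obtain ⟨f, hinj, hf⟩ :=
    (Finset.all_card_le_biUnion_card_iff_existsInjective'
      (fun p : Fin r => univ.filter (fun v : Fin N → Bool => m p ≤ wt v))).mp hall
  exact ⟨f, hinj, fun p => (mem_filter.mp (hf p)).2⟩
end
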